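/- arXiv:1811.11464 — 9 statements merged into one kernel-verified Lean document; each statement's English description precedes it below -/
import Mathlib

section
/- Let G and H be finitely generated groups and π : G → H a surjective group homomorphism. Then π(G_bound) ⊆ H_bound. -/
/-- A finite symmetric generating set of a group. -/
def IsSymmGen {G : Type*} [Group G] (S : Finset G) : Prop :=
  (∀ s ∈ S, s⁻¹ ∈ S) ∧ Subgroup.closure (S : Set G) = ⊤

/-- The word length of `g` with respect to `S`: the least `n` such that
`g` is a product of `n` elements of `S`. -/
noncomputable def wordLen {G : Type*} [Group G] (S : Finset G) (g : G) : ℕ :=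
  sInf {n : ℕ | ∃ w : List G, (∀ s ∈ w, s ∈ S) ∧ w.length = n ∧ w.prod = g}

/-- Elements of uniformly bounded word length. -/
def GBound (G : Type*) [Group G] : Set G :=
  {g | ∃ M : ℕ, 0 < M ∧ ∀ S : Finset G, IsSymmGen S → wordLen S g ≤ M}

lemma exists_word_of_symmGen {G : Type*} [Group G] {S : Finset G} (hS : IsSymmGen S) (g : G) :
    ∃ w : List G, (∀ s ∈ w, s ∈ S) ∧ w.prod = g := by
  have hg : g ∈ (Subgroup.closure (S : Set G)).toSubmonoid := by
    rw [hS.2]; trivial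
  rw [Subgroup.closure_toSubmonoid] at hg
  obtain ⟨l, hl, hprod⟩ := Submonoid.exists_list_of_mem_closure hg
  refine ⟨l, fun s hs => ?_, hprod⟩
  rcases hl s hs with h | h
  · exact h
  · have := hS.1 _ (by simpa using h)
    simpa using this

lemma exists_min_word {G : Type*} [Group G] {S : Finset G} (hS : IsSymmGen S) (g : G) :
    ∃ w : List G, (∀ s ∈ w, s ∈ S) ∧ w.length = wordLen S g ∧ w.prod = g := by
  obtain ⟨w, hw, hp⟩ := exists_word_of_symmGen hS g
  exact Nat.sInf_mem (⟨w.length, w, hw, rfl, hp⟩ :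
    {n : ℕ | ∃ w : List G, (∀ s ∈ w, s ∈ S) ∧ w.length = n ∧ w.prod = g}.Nonempty)

lemma prod_filter_ne_one_list {H : Type*} [Group H] [DecidableEq H] (l : List H) :
    (l.filter (fun h => h ≠ 1)).prod = l.prod := by
  induction l with
  | nil => rfl
  | cons a t ih =>
    by_cases ha : a = 1
    · rw [List.filter_cons_of_neg (by simp [ha]), ih, ha, List.prod_cons, one_mul]
    · rw [List.filter_cons_of_pos (by simp [ha]), List.prod_cons, List.prod_cons, ih]

lemma wordLen_map_le {G H : Type*} [Group G] [Group H] (π : G →* H) {S : Finset G}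
    (hS : IsSymmGen S) {T : Finset H} (hST : ∀ s ∈ S, π s ∈ T ∨ π s = 1) (g : G) :
    wordLen T (π g) ≤ wordLen S g := by
  classical
  obtain ⟨w, hw, hlen, hprod⟩ := exists_min_word hS g
  set w' : List H := (w.map π).filter (fun h => h ≠ 1) with hw'
  have h1 : ∀ t ∈ w', t ∈ T := by
    intro t ht
    rw [hw', List.mem_filter] at ht
    obtain ⟨s, hs, rfl⟩ := List.mem_map.mp ht.1
    rcases hST s (hw s hs) with h | h
    · exact h
    · exact absurd h (by simpa using ht.2)
  have h2 : w'.prod = π g := by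
    rw [hw', prod_filter_ne_one_list, ← hprod]
    exact (map_list_prod π w).symm
  have h3 : wordLen T (π g) ≤ w'.length := Nat.sInf_le ⟨w', h1, rfl, h2⟩
  calc wordLen T (π g) ≤ w'.length := h3
    _ ≤ (w.map π).length := List.length_filter_le _ _
    _ = w.length := List.length_map _
    _ = wordLen S g := hlen

/-- If `π : G → H` is a surjective homomorphism of finitely generated groups,
then `π(G_bound) ⊆ H_bound`. -/
theorem stmt1 (G H : Type*) [Group G] [Group H] [Group.FG G] [Group.FG H]
    (π : G →* H) (hπ : Function.Surjective π) :
    π '' GBound G ⊆ GBound H := by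
  classical
  rintro _ ⟨g, ⟨M, hM, hg⟩, rfl⟩
  refine ⟨M, hM, fun T hT => ?_⟩
  -- lift map
  set σ : H → G := Function.surjInv hπ with hσdef
  have hσ : ∀ h, π (σ h) = h := fun h => Function.surjInv_eq hπ h
  -- finite generating set of G
  obtain ⟨X, hX⟩ := Group.fg_def.mp ‹Group.FG G›
  -- for each x, a word in T mapping to π x
  have hword : ∀ x : G, ∃ w : List H, (∀ t ∈ w, t ∈ T) ∧ w.prod = π x :=
    fun x => exists_word_of_symmGen hT (π x)
  set wfun : G → List H := fun x => Classical.choose (hword x) with hwfun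
  have hwfun1 : ∀ x, ∀ t ∈ wfun x, t ∈ T := fun x => (Classical.choose_spec (hword x)).1
  have hwfun2 : ∀ x, (wfun x).prod = π x := fun x => (Classical.choose_spec (hword x)).2
  -- the generating set of G
  set L : Finset G := T.image σ with hL
  set K : Finset G := X.image (fun x => x * ((wfun x).map σ).prod⁻¹) with hK
  set S : Finset G := (L ∪ L.image (·⁻¹)) ∪ (K ∪ K.image (·⁻¹)) with hSdef
  -- π of products of lifts
  have hlift : ∀ l : List H, π ((l.map σ).prod) = l.prod := by
    intro l
    rw [map_list_prod, List.map_map]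
    congr 1
    exact (List.map_congr_left fun a _ => hσ a).trans (List.map_id l)
  have hπK : ∀ s ∈ K, π s = 1 := by
    intro s hs
    rw [hK] at hs
    obtain ⟨x, _, rfl⟩ := Finset.mem_image.mp hs
    rw [map_mul, map_inv, hlift, hwfun2, mul_inv_cancel]
  have hπL : ∀ s ∈ L, π s ∈ T := by
    intro s hs
    obtain ⟨t, ht, rfl⟩ := Finset.mem_image.mp hs
    rw [hσ]; exact ht
  -- S is symmetric
  have hsymm : ∀ s ∈ S, s⁻¹ ∈ S := by
    intro s hs
    rw [hSdef, Finset.mem_union, Finset.mem_union, Finset.mem_union] at hs ⊢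
    rcases hs with (h | h) | (h | h)
    · exact Or.inl (Or.inr (Finset.mem_image_of_mem _ h))
    · obtain ⟨a, ha, rfl⟩ := Finset.mem_image.mp h
      exact Or.inl (Or.inl (by simpa using ha))
    · exact Or.inr (Or.inr (Finset.mem_image_of_mem _ h))
    · obtain ⟨a, ha, rfl⟩ := Finset.mem_image.mp h
      exact Or.inr (Or.inl (by simpa using ha))
  -- S generates G
  have hLS : L ⊆ S := by
    intro a ha; rw [hSdef]
    exact Finset.mem_union_left _ (Finset.mem_union_left _ ha)
  have hKS : K ⊆ S := by
    intro a ha; rw [hSdef]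
    exact Finset.mem_union_right _ (Finset.mem_union_left _ ha)
  have hgen : Subgroup.closure (S : Set G) = ⊤ := by
    rw [eq_top_iff, ← hX, Subgroup.closure_le]
    intro x hx
    have hx' : x ∈ X := hx
    have hp : ((wfun x).map σ).prod ∈ Subgroup.closure (S : Set G) := by
      apply Subgroup.list_prod_mem
      intro a ha
      obtain ⟨t, ht, rfl⟩ := List.mem_map.mp ha
      exact Subgroup.subset_closure (hLS (Finset.mem_image_of_mem σ (hwfun1 x t ht)))
    have hk : x * ((wfun x).map σ).prod⁻¹ ∈ Subgroup.closure (S : Set G) :=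
      Subgroup.subset_closure (hKS (Finset.mem_image_of_mem _ hx'))
    have : x * ((wfun x).map σ).prod⁻¹ * ((wfun x).map σ).prod ∈
        Subgroup.closure (S : Set G) := mul_mem hk hp
    simpa using this
  -- π maps S into T ∪ {1}
  have hST : ∀ s ∈ S, π s ∈ T ∨ π s = 1 := by
    intro s hs
    rw [hSdef, Finset.mem_union, Finset.mem_union, Finset.mem_union] at hs
    rcases hs with (h | h) | (h | h)
    · exact Or.inl (hπL s h)
    · obtain ⟨a, ha, rfl⟩ := Finset.mem_image.mp h
      exact Or.inl (by rw [map_inv]; exact hT.1 _ (hπL a ha))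
    · exact Or.inr (hπK s h)
    · obtain ⟨a, ha, rfl⟩ := Finset.mem_image.mp h
      exact Or.inr (by rw [map_inv, hπK a ha, inv_one])
  calc wordLen T (π g) ≤ wordLen S g := wordLen_map_le π ⟨hsymm, hgen⟩ hST g
    _ ≤ M := hg S ⟨hsymm, hgen⟩
end

section
/- Let q > 1 be an integer and G = ℤ × ℤ/qℤ. Then G_bound is trivial: for every nonidentity element g of G and every constant M > 0 there exists a finite symmetric generating set S of G with l_S(g) > M. -/
/-- A finite symmetric generating set of an additive group. -/
def IsSymmGenAdd {G : Type*} [AddGroup G] (S : Finset G) : Prop :=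
  (∀ s ∈ S, -s ∈ S) ∧ AddSubgroup.closure (S : Set G) = ⊤

/-- The word length of `g` with respect to `S`: the least `n` such that
`g` is a sum of `n` elements of `S`. -/
noncomputable def addWordLen {G : Type*} [AddGroup G] (S : Finset G) (g : G) : ℕ :=
  sInf {n : ℕ | ∃ w : List G, (∀ s ∈ w, s ∈ S) ∧ w.length = n ∧ w.sum = g}

/-- Elements of uniformly bounded word length. -/
def AddGBound (G : Type*) [AddGroup G] : Set G :=
  {g | ∃ M : ℕ, 0 < M ∧ ∀ S : Finset G, IsSymmGenAdd S → addWordLen S g ≤ M}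

/-- Any word in `{±(m,0), ±(t,1)}` sums to `(m*x + t*y, y)` with `|x|+|y|` at
most the length of the word. -/
lemma word_decomp (q : ℕ) (m t : ℤ) (w : List (ℤ × ZMod q))
    (hw : ∀ s ∈ w, s = ((m, 0) : ℤ × ZMod q) ∨ s = (-m, 0) ∨ s = (t, 1) ∨ s = (-t, -1)) :
    ∃ x y : ℤ, w.sum = (m * x + t * y, (y : ZMod q)) ∧ |x| + |y| ≤ w.length := by
  induction w with
  | nil => exact ⟨0, 0, by norm_num; rfl, by simp⟩
  | cons s w ih =>
    obtain ⟨x, y, hsum, hlen⟩ := ih (fun s hs => hw s (List.mem_cons_of_mem _ hs))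
    have hlen' : (|x| + |y| : ℤ) ≤ (w.length : ℤ) := hlen
    rcases hw s (List.mem_cons_self) with h | h | h | h
    · refine ⟨x + 1, y, ?_, ?_⟩
      · rw [List.sum_cons, hsum, h, Prod.mk_add_mk, Prod.mk.injEq]
        exact ⟨by ring, by simp⟩
      · have h1 : |x + 1| ≤ |x| + 1 := (abs_add_le x 1).trans (by norm_num)
        rw [List.length_cons]
        push_cast
        linarith
    · refine ⟨x - 1, y, ?_, ?_⟩
      · rw [List.sum_cons, hsum, h, Prod.mk_add_mk, Prod.mk.injEq]
        exact ⟨by ring, by simp⟩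
      · have h1 : |x - 1| ≤ |x| + 1 := (abs_sub x 1).trans (by norm_num)
        rw [List.length_cons]
        push_cast
        linarith
    · refine ⟨x, y + 1, ?_, ?_⟩
      · rw [List.sum_cons, hsum, h, Prod.mk_add_mk, Prod.mk.injEq]
        refine ⟨by ring, ?_⟩
        push_cast
        ring
      · have h1 : |y + 1| ≤ |y| + 1 := (abs_add_le y 1).trans (by norm_num)
        rw [List.length_cons]
        push_cast
        linarith
    · refine ⟨x, y - 1, ?_, ?_⟩
      · rw [List.sum_cons, hsum, h, Prod.mk_add_mk, Prod.mk.injEq]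
        refine ⟨by ring, ?_⟩
        push_cast
        ring
      · have h1 : |y - 1| ≤ |y| + 1 := (abs_sub y 1).trans (by norm_num)
        rw [List.length_cons]
        push_cast
        linarith

/-- If `m` is coprime to `q*t`, then `{±(m,0), ±(t,1)}` is a symmetric
generating set of `ℤ × ZMod q`. -/
lemma gen_top (q : ℕ) (m t : ℤ) (hco : IsCoprime m ((q : ℤ) * t)) :
    IsSymmGenAdd ({(m, 0), (-m, 0), (t, 1), (-t, -1)} : Finset (ℤ × ZMod q)) := by
  constructor
  · intro s hs
    simp only [Finset.mem_insert, Finset.mem_singleton] at hs ⊢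
    rcases hs with rfl | rfl | rfl | rfl
    · right; left; rw [Prod.mk.injEq]; constructor <;> simp
    · left; rw [Prod.mk.injEq]; constructor <;> simp
    · right; right; right; rw [Prod.mk.injEq]; constructor <;> simp
    · right; right; left; rw [Prod.mk.injEq]; constructor <;> simp
  · rw [eq_top_iff]
    rintro ⟨a, b⟩ -
    set S : Finset (ℤ × ZMod q) := {(m, 0), (-m, 0), (t, 1), (-t, -1)} with hS
    have ht : ((t, 1) : ℤ × ZMod q) ∈ AddSubgroup.closure (S : Set (ℤ × ZMod q)) :=
      AddSubgroup.subset_closure (by simp [hS])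
    have hm : ((m, 0) : ℤ × ZMod q) ∈ AddSubgroup.closure (S : Set (ℤ × ZMod q)) :=
      AddSubgroup.subset_closure (by simp [hS])
    have hqt : (((q : ℤ) * t, 0) : ℤ × ZMod q) ∈
        AddSubgroup.closure (S : Set (ℤ × ZMod q)) := by
      have h2 : ((q : ℤ) • ((t, 1) : ℤ × ZMod q)) = ((q : ℤ) * t, 0) := by
        rw [Prod.smul_mk, Prod.mk.injEq]
        constructor
        · rw [zsmul_eq_mul]; norm_cast
        · rw [zsmul_eq_mul, mul_one]
          push_cast
          exact ZMod.natCast_self q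
      rw [← h2]
      exact AddSubgroup.zsmul_mem _ ht _
    obtain ⟨u, v, huv⟩ := hco
    have h1 : ((1, 0) : ℤ × ZMod q) ∈ AddSubgroup.closure (S : Set (ℤ × ZMod q)) := by
      have heq : ((1, 0) : ℤ × ZMod q) = u • ((m, 0) : ℤ × ZMod q) +
          v • (((q : ℤ) * t, 0) : ℤ × ZMod q) := by
        rw [Prod.smul_mk, Prod.smul_mk, Prod.mk_add_mk, Prod.mk.injEq]
        constructor
        · rw [zsmul_eq_mul, zsmul_eq_mul]
          push_cast
          linarith [huv]
        · simp
      rw [heq]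
      exact add_mem (AddSubgroup.zsmul_mem _ hm _) (AddSubgroup.zsmul_mem _ hqt _)
    obtain ⟨k, hk⟩ := ZMod.intCast_surjective b
    have heq : ((a, b) : ℤ × ZMod q) = (a - t * k) • ((1, 0) : ℤ × ZMod q) +
        k • ((t, 1) : ℤ × ZMod q) := by
      rw [Prod.smul_mk, Prod.smul_mk, Prod.mk_add_mk, Prod.mk.injEq]
      constructor
      · rw [zsmul_eq_mul, zsmul_eq_mul]
        push_cast
        ring
      · rw [smul_zero, zero_add, zsmul_eq_mul, mul_one, hk]
    rw [heq]
    exact add_mem (AddSubgroup.zsmul_mem _ h1 _) (AddSubgroup.zsmul_mem _ ht _)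

/-- For `G = ℤ × ℤ/qℤ` with `q > 1`, `G_bound` is trivial: every non-identity
element has unbounded word length over symmetric generating sets. -/
theorem stmt3 (q : ℕ) (hq : 1 < q) :
    ∀ g : ℤ × ZMod q, g ≠ 0 → ∀ M : ℕ, 0 < M →
      ∃ S : Finset (ℤ × ZMod q), IsSymmGenAdd S ∧ M < addWordLen S g := by
  rintro ⟨a, b⟩ hg M hM
  haveI : NeZero q := ⟨by omega⟩
  obtain ⟨m, hmle, hmp⟩ := Nat.exists_infinite_primes (a.natAbs + q + 2 * M + 3)
  haveI : Fact (Nat.Prime m) := ⟨hmp⟩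
  haveI : NeZero m := ⟨hmp.pos.ne'⟩
  have hm2 : 2 ≤ m := hmp.two_le
  have hm2M : 2 * M + 2 < m := by omega
  have hmq : q < m := by omega
  have hma : a.natAbs < m := by omega
  -- choose the key generator coefficient `t`
  obtain ⟨t, htm, hkey⟩ :
      ∃ t : ℤ, ¬ (m : ℤ) ∣ t ∧
        ∀ y : ℤ, (m : ℤ) ∣ (t * y - a) → ((y : ZMod q) = b) → (M : ℤ) < |y| := by
    by_cases ha : a = 0
    · refine ⟨1, ?_, ?_⟩
      · intro h
        have h1 : (m : ℤ) ≤ 1 := Int.le_of_dvd one_pos h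
        have h2 : (2 : ℤ) ≤ (m : ℤ) := by exact_mod_cast hm2
        linarith
      · intro y hdvd hyb
        have hb : b ≠ 0 := by
          intro hb0
          exact hg (by rw [ha, hb0]; rfl)
        have hy0 : y ≠ 0 := by
          rintro rfl
          exact hb (by simpa using hyb.symm)
        rw [ha, sub_zero, one_mul] at hdvd
        have h1 : (m : ℤ) ≤ |y| := Int.le_of_dvd (abs_pos.mpr hy0) ((dvd_abs _ _).mpr hdvd)
        have h2 : ((2 * M + 2 : ℕ) : ℤ) < (m : ℤ) := by exact_mod_cast hm2M
        push_cast at h2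
        linarith
    · have haz : ((a : ℤ) : ZMod m) ≠ 0 := by
        rw [Ne, ZMod.intCast_zmod_eq_zero_iff_dvd]
        intro h
        have h1 : (m : ℤ) ≤ |a| := Int.le_of_dvd (abs_pos.mpr ha) ((dvd_abs _ _).mpr h)
        rw [Int.abs_eq_natAbs] at h1
        have h2 : (m : ℤ) ≤ (a.natAbs : ℤ) := h1
        have := Int.ofNat_le.mp h2
        omega
      have hM1 : ((M + 1 : ℕ) : ZMod m) ≠ 0 := by
        rw [Ne, ZMod.natCast_eq_zero_iff]
        intro h
        have := Nat.le_of_dvd (by omega) h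
        omega
      set u : ZMod m := ((a : ℤ) : ZMod m) * ((M + 1 : ℕ) : ZMod m)⁻¹ with hu
      have huz : u ≠ 0 := mul_ne_zero haz (inv_ne_zero hM1)
      have hvz : u.val ≠ 0 := fun h => huz ((ZMod.val_eq_zero u).mp h)
      have hvlt : u.val < m := ZMod.val_lt u
      refine ⟨(u.val : ℤ), ?_, ?_⟩
      · rw [Int.natCast_dvd_natCast]
        intro h
        have := Nat.le_of_dvd (Nat.pos_of_ne_zero hvz) h
        omega
      · intro y hdvd hyb
        have hcast : (((u.val : ℤ)) : ZMod m) = u := by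
          rw [Int.cast_natCast, ZMod.natCast_val, ZMod.cast_id]
        have h0 : ((((u.val : ℤ)) * y - a : ℤ) : ZMod m) = 0 :=
          (ZMod.intCast_zmod_eq_zero_iff_dvd _ m).mpr hdvd
        push_cast at h0
        rw [sub_eq_zero] at h0
        -- h0 : (u.val cast) * y = a  in ZMod m
        have h1 : u * ((y : ℤ) : ZMod m) = ((a : ℤ) : ZMod m) := by
          rw [← hcast]
          exact_mod_cast h0
        have h2 : ((a : ℤ) : ZMod m) * (((M + 1 : ℕ) : ZMod m)⁻¹ * ((y : ℤ) : ZMod m)) =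
            ((a : ℤ) : ZMod m) * 1 := by
          rw [mul_one, ← mul_assoc, ← hu]
          exact h1
        have h3 : ((M + 1 : ℕ) : ZMod m)⁻¹ * ((y : ℤ) : ZMod m) = 1 :=
          mul_left_cancel₀ haz h2
        have h4 : ((y : ℤ) : ZMod m) = ((M + 1 : ℕ) : ZMod m) :=
          ((inv_mul_eq_one₀ hM1).mp h3).symm
        by_contra hle
        push_neg at hle
        have hyb2 := abs_le.mp hle
        have h5 : (m : ℤ) ∣ (y - ((M : ℤ) + 1)) := by
          rw [← ZMod.intCast_zmod_eq_zero_iff_dvd]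
          push_cast
          push_cast at h4
          rw [h4]
          ring
        have hne : y - ((M : ℤ) + 1) ≠ 0 := by omega
        have h6 : (m : ℤ) ≤ |y - ((M : ℤ) + 1)| :=
          Int.le_of_dvd (abs_pos.mpr hne) ((dvd_abs _ _).mpr h5)
        have h7 : |y - ((M : ℤ) + 1)| ≤ |y| + |(M : ℤ) + 1| := abs_sub y _
        have h8 : |(M : ℤ) + 1| = (M : ℤ) + 1 := abs_of_nonneg (by positivity)
        have h9 : ((2 * M + 2 : ℕ) : ℤ) < (m : ℤ) := by exact_mod_cast hm2M
        push_cast at h9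
        linarith
  -- the generating set
  set S : Finset (ℤ × ZMod q) := {((m : ℤ), 0), (-(m : ℤ), 0), (t, 1), (-t, -1)} with hS
  have hpm : Prime (m : ℤ) := Nat.prime_iff_prime_int.mp hmp
  have hcop : IsCoprime ((m : ℤ)) ((q : ℤ) * t) := by
    rw [hpm.coprime_iff_not_dvd]
    intro h
    rcases hpm.dvd_mul.mp h with h | h
    · rw [Int.natCast_dvd_natCast] at h
      have := Nat.le_of_dvd (by omega) h
      omega
    · exact htm h
  have hgen := gen_top q (m : ℤ) t hcop
  refine ⟨S, hgen, ?_⟩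
  have hmem : ((a, b) : ℤ × ZMod q) ∈ AddSubgroup.closure (S : Set (ℤ × ZMod q)) := by
    rw [hgen.2]
    exact AddSubgroup.mem_top _
  have hmem' : ((a, b) : ℤ × ZMod q) ∈
      (AddSubgroup.closure (S : Set (ℤ × ZMod q))).toAddSubmonoid := hmem
  rw [AddSubgroup.closure_toAddSubmonoid] at hmem'
  obtain ⟨l, hl, hlsum⟩ := AddSubmonoid.exists_list_of_mem_closure hmem'
  have hl' : ∀ s ∈ l, s ∈ S := by
    intro s hs
    rcases hl s hs with h | h
    · exact h
    · have h2 : -s ∈ S := by simpa [Set.mem_neg] using h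
      have h3 := hgen.1 _ h2
      rwa [neg_neg] at h3
  have hne : ({n : ℕ | ∃ w : List (ℤ × ZMod q), (∀ s ∈ w, s ∈ S) ∧ w.length = n ∧
      w.sum = (a, b)}).Nonempty := ⟨l.length, l, hl', rfl, hlsum⟩
  have hinf := Nat.sInf_mem hne
  obtain ⟨w, hwS, hwlen, hwsum⟩ := hinf
  rw [addWordLen, ← hwlen]
  -- now bound w.length from below
  have hw4 : ∀ s ∈ w, s = (((m : ℤ), 0) : ℤ × ZMod q) ∨ s = (-(m : ℤ), 0) ∨ s = (t, 1) ∨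
      s = (-t, -1) := by
    intro s hs
    have := hwS s hs
    simpa [hS, Finset.mem_insert, Finset.mem_singleton] using this
  obtain ⟨x, y, hsum, hlen⟩ := word_decomp q (m : ℤ) t w hw4
  rw [hwsum, Prod.mk.injEq] at hsum
  obtain ⟨h1, h2⟩ := hsum
  have hdvd : (m : ℤ) ∣ (t * y - a) := by
    refine ⟨-x, ?_⟩
    linarith [h1.symm]
  have hMy := hkey y hdvd h2.symm
  have : (M : ℤ) < (w.length : ℤ) := by
    linarith [abs_nonneg x, hlen]
  exact_mod_cast this
end

section
/- Let G be a finitely generated group. Then every finitely generated subgroup H of G_bound is virtually abelian, i.e. H contains an abelian subgroup of finite index. -/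
open Pointwise

private lemma list_prod_mem_pow {G : Type*} [Group G] (U : Set G) :
    ∀ w : List G, (∀ s ∈ w, s ∈ U) → w.prod ∈ U ^ w.length
  | [], _ => by simp [Set.mem_one]
  | a :: w, h => by
      rw [List.prod_cons, List.length_cons, pow_succ']
      exact Set.mul_mem_mul (h a (by simp))
        (list_prod_mem_pow U w fun s hs => h s (by simp [hs]))

private lemma set_pow_finite {G : Type*} [Group G] {U : Set G} (hU : U.Finite) :
    ∀ n : ℕ, (U ^ n).Finite
  | 0 => by simp only [pow_zero]; exact Set.finite_one
  | n + 1 => by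
      rw [pow_succ]
      exact (set_pow_finite hU n).mul hU

/-- Every element of `GBound G` has all its conjugates inside a fixed finite set. -/
private lemma conj_ball {G : Type*} [Group G] [Group.FG G] (g : G) (hg : g ∈ GBound G) :
    ∃ B : Set G, B.Finite ∧ ∀ x : G, x * g * x⁻¹ ∈ B := by
  classical
  obtain ⟨_, S0, -, hS0⟩ := Group.fg_iff'.mp ‹Group.FG G›
  set S : Finset G := S0 ∪ S0⁻¹ with hSdef
  have hSsymm : ∀ s ∈ S, s⁻¹ ∈ S := by
    intro s hs
    rcases Finset.mem_union.mp hs with h | h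
    · exact Finset.mem_union_right _ (by simpa using Finset.inv_mem_inv h)
    · rcases Finset.mem_inv.mp h with ⟨t, ht, rfl⟩
      exact Finset.mem_union_left _ (by simpa using ht)
  have hSgen : Subgroup.closure (S : Set G) = ⊤ := by
    rw [eq_top_iff, ← hS0]
    exact Subgroup.closure_mono (by intro y hy; simp [hSdef]; exact Or.inl hy)
  obtain ⟨M, hMpos, hM⟩ := hg
  refine ⟨(insert 1 (S : Set G)) ^ M, set_pow_finite ((S.finite_toSet).insert 1) M, ?_⟩
  intro x
  -- conjugated generating set
  set Sx : Finset G := S.image (fun s => x⁻¹ * s * x) with hSxdef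
  have hSxsymm : ∀ s ∈ Sx, s⁻¹ ∈ Sx := by
    intro s hs
    rcases Finset.mem_image.mp hs with ⟨t, ht, rfl⟩
    refine Finset.mem_image.mpr ⟨t⁻¹, hSsymm t ht, by group⟩
  have hSxgen : Subgroup.closure (Sx : Set G) = ⊤ := by
    have himg : (Sx : Set G) = ⇑(MulAut.conj x⁻¹).toMonoidHom '' (S : Set G) := by
      rw [hSxdef, Finset.coe_image]
      ext y
      simp [MulAut.conj_apply]
    rw [himg, ← MonoidHom.map_closure, hSgen]
    exact Subgroup.map_top_of_surjective _ (MulAut.conj x⁻¹).surjective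
  -- the word-length set for `g` over `Sx` is nonempty
  have hgmem : g ∈ Submonoid.closure ((Sx : Set G) ∪ (Sx : Set G)⁻¹) := by
    rw [← Subgroup.closure_toSubmonoid]
    exact hSxgen ▸ Subgroup.mem_top g
  obtain ⟨l, hl, hlprod⟩ := Submonoid.exists_list_of_mem_closure hgmem
  have hlS : ∀ y ∈ l, y ∈ Sx := by
    intro y hy
    rcases hl y hy with h | h
    · exact h
    · have := hSxsymm y⁻¹ (by simpa using h)
      simpa using this
  have hne : (wordLen Sx g) ∈
      {n : ℕ | ∃ w : List G, (∀ s ∈ w, s ∈ Sx) ∧ w.length = n ∧ w.prod = g} :=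
    Nat.sInf_mem ⟨l.length, l, hlS, rfl, hlprod⟩
  obtain ⟨w, hw, hwlen, hwprod⟩ := hne
  have hwle : w.length ≤ M := by
    rw [hwlen]; exact hM Sx ⟨hSxsymm, hSxgen⟩
  -- conjugate the word back
  set w' : List G := w.map (⇑(MulAut.conj x).toMonoidHom) with hw'def
  have hw'prod : w'.prod = x * g * x⁻¹ := by
    rw [hw'def, ← map_list_prod, hwprod]
    simp [MulAut.conj_apply]
  have hw'mem : ∀ s ∈ w', s ∈ (S : Set G) := by
    intro s hs
    rcases List.mem_map.mp hs with ⟨y, hy, rfl⟩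
    rcases Finset.mem_image.mp (hw y hy) with ⟨t, ht, rfl⟩
    have : (MulAut.conj x).toMonoidHom (x⁻¹ * t * x) = t := by
      simp [MulAut.conj_apply]; group
    rw [this]
    exact ht
  -- pad the word to length exactly M
  set w'' : List G := w' ++ List.replicate (M - w'.length) 1 with hw''def
  have hw''mem : ∀ s ∈ w'', s ∈ insert 1 (S : Set G) := by
    intro s hs
    rcases List.mem_append.mp hs with h | h
    · exact Set.mem_insert_iff.mpr (Or.inr (hw'mem s h))
    · rw [List.eq_of_mem_replicate h]
      exact Set.mem_insert _ _
  have hw''len : w''.length = M := by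
    have : w'.length = w.length := by simp [hw'def]
    rw [hw''def, List.length_append, List.length_replicate, this]
    omega
  have hw''prod : w''.prod = x * g * x⁻¹ := by
    rw [hw''def, List.prod_append, List.prod_replicate, one_pow, mul_one, hw'prod]
  have := list_prod_mem_pow (insert 1 (S : Set G)) w'' hw''mem
  rwa [hw''len, hw''prod] at this

/-- If all conjugates of `t` lie in a fixed finite set, its centralizer has finite index. -/
private lemma centralizer_finiteIndex {G : Type*} [Group G] [Group.FG G] (H : Subgroup G)
    (t : H) (ht : (t : G) ∈ GBound G) :
    (Subgroup.centralizer ({t} : Set H)).FiniteIndex := by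
  classical
  obtain ⟨B, hBfin, hB⟩ := conj_ball (t : G) ht
  set C : Subgroup H := Subgroup.centralizer ({t} : Set H) with hCdef
  have key : ∀ a b : H, (QuotientGroup.leftRel C) a b →
      ((a * t * a⁻¹ : H) : G) = ((b * t * b⁻¹ : H) : G) := by
    intro a b hab
    have hmem : a⁻¹ * b ∈ C := (QuotientGroup.leftRel_apply).mp hab
    have hc : a⁻¹ * b * t = t * (a⁻¹ * b) :=
      Subgroup.mem_centralizer_singleton_iff.mp hmem
    have : (b * t * b⁻¹ : H) = a * t * a⁻¹ := by
      calc (b * t * b⁻¹ : H) = a * (a⁻¹ * b * t) * b⁻¹ := by group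
        _ = a * (t * (a⁻¹ * b)) * b⁻¹ := by rw [hc]
        _ = a * t * a⁻¹ := by group
    rw [this]
  let f : H → B := fun x => ⟨((x * t * x⁻¹ : H) : G), by
    have : ((x * t * x⁻¹ : H) : G) = (x : G) * (t : G) * (x : G)⁻¹ := by push_cast; ring_nf
    rw [this]; exact hB (x : G)⟩
  haveI : Finite B := hBfin.to_subtype
  let F : H ⧸ C → B := Quotient.lift f (fun a b hab => Subtype.ext (key a b hab))
  have hFinj : Function.Injective F := by
    intro q1 q2
    refine Quotient.inductionOn₂ q1 q2 (fun a b h => ?_)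
    have h' : ((a * t * a⁻¹ : H) : G) = ((b * t * b⁻¹ : H) : G) :=
      congrArg (fun z : B => (z : G)) h
    have h'' : (a * t * a⁻¹ : H) = b * t * b⁻¹ := Subtype.coe_injective h'
    refine Quotient.sound (QuotientGroup.leftRel_apply.mpr
      (Subgroup.mem_centralizer_singleton_iff.mpr ?_))
    calc a⁻¹ * b * t = a⁻¹ * (b * t * b⁻¹) * b := by group
      _ = a⁻¹ * (a * t * a⁻¹) * b := by rw [h'']
      _ = t * (a⁻¹ * b) := by group
  haveI : Finite (H ⧸ C) := Finite.of_injective F hFinj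
  exact Subgroup.finiteIndex_of_finite_quotient

/-- Every finitely generated subgroup of `G_bound` is virtually abelian. -/
theorem stmt6 (G : Type*) [Group G] [Group.FG G] (H : Subgroup G) [Group.FG H]
    (hH : (H : Set G) ⊆ GBound G) :
    ∃ K : Subgroup H, (∀ a b : K, a * b = b * a) ∧ K.FiniteIndex := by
  classical
  obtain ⟨_, T, -, hT⟩ := Group.fg_iff'.mp ‹Group.FG H›
  refine ⟨Subgroup.center H, ?_, ?_⟩
  · intro a b
    exact Subtype.ext (Subgroup.mem_center_iff.mp b.2 a.1)
  · have hfi : ∀ t : T, (Subgroup.centralizer ({(t : H)} : Set H)).FiniteIndex :=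
      fun t => centralizer_finiteIndex H (t : H) (hH (t : H).2)
    haveI : (⨅ t : T, Subgroup.centralizer ({(t : H)} : Set H)).FiniteIndex :=
      Subgroup.finiteIndex_iInf hfi
    refine Subgroup.finiteIndex_of_le (H := ⨅ t : T, Subgroup.centralizer ({(t : H)} : Set H)) ?_
    intro x hx
    rw [Subgroup.mem_center_iff]
    intro g
    have hg : g ∈ Subgroup.closure (T : Set H) := hT ▸ Subgroup.mem_top g
    induction hg using Subgroup.closure_induction with
    | mem y hy =>
        have hxc : x ∈ Subgroup.centralizer ({y} : Set H) := by
          have := Subgroup.mem_iInf.mp hx ⟨y, hy⟩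
          simpa using this
        exact (Subgroup.mem_centralizer_singleton_iff.mp hxc).symm
    | one => simp
    | mul y z _ _ hy hz => rw [mul_assoc, hz, ← mul_assoc, hy, mul_assoc]
    | inv y _ hy =>
        calc y⁻¹ * x = y⁻¹ * (x * y) * y⁻¹ := by group
          _ = y⁻¹ * (y * x) * y⁻¹ := by rw [← hy]
          _ = x * y⁻¹ := by group
end

section
/- Let G be an infinite finitely generated abelian group. Then G_bound is trivial: for every nonidentity element g of G and every constant M > 0 there exists a finite symmetric generating set S of G with l_S(g) > M. -/
-- base-K non-vanishing lemma
lemma aux_baseK : ∀ (r : ℕ) (b : ℕ → ℤ) (K : ℕ),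
    (∑ i ∈ Finset.range r, (b i).natAbs) < K →
    (∃ i, i < r ∧ b i ≠ 0) →
    (∑ i ∈ Finset.range r, b i * (K : ℤ) ^ i) ≠ 0 := by
  intro r
  induction r with
  | zero => rintro b K _ ⟨i, hi, _⟩; omega
  | succ n ih =>
    rintro b K hlt ⟨i, hi, hbi⟩ hsum
    rw [Finset.sum_range_succ'] at hsum
    have hfac : ∀ j, b (j + 1) * (K : ℤ) ^ (j + 1) = (K : ℤ) * (b (j + 1) * (K : ℤ) ^ j) := by
      intro j; ring
    simp only [hfac, ← Finset.mul_sum, pow_zero, mul_one] at hsum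
    have hdvd : (K : ℤ) ∣ b 0 := ⟨-(∑ x ∈ Finset.range n, b (x + 1) * (K : ℤ) ^ x), by linarith⟩
    have hb0abs : (b 0).natAbs < K := by
      have : (b 0).natAbs ≤ ∑ i ∈ Finset.range (n + 1), (b i).natAbs := by
        rw [Finset.sum_range_succ']
        exact Nat.le_add_left _ _
      omega
    have hb0 : b 0 = 0 := by
      refine Int.eq_zero_of_abs_lt_dvd hdvd ?_
      rw [Int.abs_eq_natAbs]
      exact_mod_cast hb0abs
    rw [hb0, add_zero, mul_eq_zero] at hsum
    have hKpos : 0 < K := lt_of_le_of_lt (Nat.zero_le _) hlt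
    rcases hsum with h | h
    · have : (K : ℤ) = 0 := h
      omega
    · refine ih (fun j => b (j + 1)) K ?_ ?_ h
      · calc (∑ i ∈ Finset.range n, (b (i + 1)).natAbs)
            ≤ ∑ i ∈ Finset.range (n + 1), (b i).natAbs := by
              rw [Finset.sum_range_succ']; exact Nat.le_add_right _ _
          _ < K := hlt
      · have hi1 : 1 ≤ i := by
          rcases Nat.eq_zero_or_pos i with rfl | h'
          · exact absurd hb0 hbi
          · exact h'
        refine ⟨i - 1, by omega, ?_⟩
        have heq : i - 1 + 1 = i := by omega
        simpa only [heq] using hbi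

-- product of zpowers of a fixed base
lemma aux_prod_zpow {G : Type*} [CommGroup G] (x : G) {ι : Type*} (s : Finset ι) (m : ι → ℤ) :
    ∏ i ∈ s, x ^ m i = x ^ (∑ i ∈ s, m i) := by
  induction s using Finset.cons_induction with
  | empty => simp
  | cons a s ha ih => rw [Finset.prod_cons, Finset.sum_cons, zpow_add, ih]

lemma aux_pair {G : Type*} [CommGroup G] (x : G) (z : ℤ) (m n : ℕ) :
    (x ^ z) ^ m * (x ^ (-z)) ^ n = x ^ (z * ((m : ℤ) - n)) := by
  rw [← zpow_natCast (x ^ z) m, ← zpow_natCast (x ^ (-z)) n, ← zpow_mul, ← zpow_mul, ← zpow_add]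
  ring_nf

lemma aux_pair2 {G : Type*} [CommGroup G] (a : G) (m n : ℕ) :
    a ^ m * (a⁻¹) ^ n = a ^ ((m : ℤ) - n) := by
  rw [← zpow_natCast a m, ← zpow_natCast a⁻¹ n, inv_zpow, ← zpow_neg, ← zpow_add]
  ring_nf


set_option maxHeartbeats 2000000 in
theorem aux_main {G : Type*} [CommGroup G] (Φ : G →* Multiplicative ℤ) (x : G)
    (hx : Multiplicative.toAdd (Φ x) = 1) (T : Finset G)
    (hT : Subgroup.closure (T : Set G) = ⊤)
    (g : G) (hg : g ≠ 1) (M : ℕ) (hM : 0 < M) :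
    ∃ S : Finset G, IsSymmGen S ∧ M < wordLen S g := by
  classical
  obtain ⟨v, hvdef⟩ : ∃ v : G → ℤ, v = fun a => Multiplicative.toAdd (Φ a) := ⟨_, rfl⟩
  have v_mul : ∀ a b : G, v (a * b) = v a + v b := by
    intro a b; rw [hvdef]; simp
  have v_zpow : ∀ (a : G) (z : ℤ), v (a ^ z) = z * v a := by
    intro a z; rw [hvdef]; simp only [map_zpow, toAdd_zpow, smul_eq_mul]
  have v_inv : ∀ a : G, v a⁻¹ = -(v a) := by
    intro a; rw [hvdef]; simp
  have v_x : v x = 1 := by rw [hvdef]; exact hx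
  obtain ⟨r, hr⟩ : ∃ r : ℕ, r = T.card := ⟨_, rfl⟩
  obtain ⟨gen, hgen⟩ : ∃ gen : Fin r → G,
      gen = fun j => ((T.equivFin.symm (Fin.cast hr j) : {a // a ∈ T}) : G) := ⟨_, rfl⟩
  obtain ⟨d, hd⟩ : ∃ d : ℤ, d = v g := ⟨_, rfl⟩
  obtain ⟨D, hD⟩ : ∃ D : ℕ, (D : ℤ) = |d| := ⟨d.natAbs, (Int.abs_eq_natAbs d).symm⟩
  obtain ⟨Kk, hKk⟩ : ∃ K : ℕ, K = M + 1 := ⟨_, rfl⟩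
  obtain ⟨N, hN⟩ : ∃ N : ℕ, N = M + D + 1 := ⟨_, rfl⟩
  obtain ⟨Q, hQ⟩ : ∃ Q : ℕ, Q = Kk * N + 1 := ⟨_, rfl⟩
  obtain ⟨P, hP⟩ : ∃ P : ℕ, P = N * Q := ⟨_, rfl⟩
  have hN2 : 2 ≤ N := by omega
  have hQ0 : 0 < Q := by rw [hQ]; exact Nat.succ_pos _
  have hNQ : N < Q := by
    have h1 : 1 * N ≤ Kk * N := Nat.mul_le_mul_right N (by omega)
    rw [one_mul] at h1
    rw [hQ]
    exact Nat.lt_succ_of_le h1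
  have hQP : Q < P := by
    rw [hP]
    have h := mul_lt_mul_of_pos_right (show (1:ℕ) < N by omega) hQ0
    simpa using h
  have hPPj : ∀ j : Fin r, P ≤ P * Kk ^ (j.val + 1) := fun j =>
    le_mul_of_one_le_right (Nat.zero_le P) (Nat.one_le_pow _ _ (by omega))
  have hQPj : ∀ j : Fin r, Q < P * Kk ^ (j.val + 1) := fun j => lt_of_lt_of_le hQP (hPPj j)
  obtain ⟨f, hf⟩ : ∃ f : Fin r → G, f = fun j => gen j * x ^ (-(v (gen j))) := ⟨_, rfl⟩
  have hvf : ∀ j, v (f j) = 0 := by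
    intro j
    rw [hf]
    rw [v_mul, v_zpow, v_x]
    ring
  obtain ⟨y, hy⟩ : ∃ y : Fin r → G,
      y = fun j => x ^ ((P * Kk ^ (j.val + 1) : ℕ) : ℤ) * f j := ⟨_, rfl⟩
  have hvy : ∀ j, v (y j) = ((P * Kk ^ (j.val + 1) : ℕ) : ℤ) := by
    intro j
    rw [hy]
    rw [v_mul, v_zpow, v_x, hvf]
    ring
  obtain ⟨σ, hσ⟩ : ∃ σ : (Bool × Bool) ⊕ (Fin r × Bool) → G, σ = fun i =>
    match i with
    | .inl (true, true) => x ^ (N : ℤ)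
    | .inl (true, false) => x ^ (-(N : ℤ))
    | .inl (false, true) => x ^ (Q : ℤ)
    | .inl (false, false) => x ^ (-(Q : ℤ))
    | .inr (j, true) => y j
    | .inr (j, false) => (y j)⁻¹ := ⟨_, rfl⟩
  have hσ1 : σ (.inl (true, true)) = x ^ (N : ℤ) := by rw [hσ]
  have hσ2 : σ (.inl (true, false)) = x ^ (-(N : ℤ)) := by rw [hσ]
  have hσ3 : σ (.inl (false, true)) = x ^ (Q : ℤ) := by rw [hσ]
  have hσ4 : σ (.inl (false, false)) = x ^ (-(Q : ℤ)) := by rw [hσ]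
  have hσ5 : ∀ j, σ (.inr (j, true)) = y j := by intro j; rw [hσ]
  have hσ6 : ∀ j, σ (.inr (j, false)) = (y j)⁻¹ := by intro j; rw [hσ]
  obtain ⟨ν, hν⟩ : ∃ ν : (Bool × Bool) ⊕ (Fin r × Bool) → ℤ, ν = fun i =>
    match i with
    | .inl (true, true) => (N : ℤ)
    | .inl (true, false) => -(N : ℤ)
    | .inl (false, true) => (Q : ℤ)
    | .inl (false, false) => -(Q : ℤ)
    | .inr (j, true) => ((P * Kk ^ (j.val + 1) : ℕ) : ℤ)
    | .inr (j, false) => -((P * Kk ^ (j.val + 1) : ℕ) : ℤ) := ⟨_, rfl⟩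
  have hvσ : ∀ i, v (σ i) = ν i := by
    intro i
    rcases i with ⟨u, s⟩ | ⟨j, s⟩
    · cases u <;> cases s <;>
        simp only [hσ, hν, v_zpow, v_x, mul_one]
    · cases s <;> simp only [hσ, hν, v_inv, hvy]
  have hνinj : Function.Injective ν := by
    have hQj : ∀ j : Fin r, (Q : ℤ) < ((P * Kk ^ (j.val + 1) : ℕ) : ℤ) := by
      intro j; exact_mod_cast hQPj j
    intro i1 i2 h
    rcases i1 with ⟨u1, s1⟩ | ⟨j1, s1⟩ <;> rcases i2 with ⟨u2, s2⟩ | ⟨j2, s2⟩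
    · cases u1 <;> cases s1 <;> cases u2 <;> cases s2 <;>
        simp only [hν] at h <;> first | rfl | (exfalso; omega)
    · exfalso
      have hj := hQj j2
      cases u1 <;> cases s1 <;> cases s2 <;> simp only [hν] at h <;> omega
    · exfalso
      have hj := hQj j1
      cases u2 <;> cases s2 <;> cases s1 <;> simp only [hν] at h <;> omega
    · have hj1 := hQj j1
      have hj2 := hQj j2
      have hPpos : 0 < P := by omega
      cases s1 <;> cases s2 <;> simp only [hν] at h
      · have h1 : P * Kk ^ (j1.val + 1) = P * Kk ^ (j2.val + 1) := by omega
        have h2 := Nat.eq_of_mul_eq_mul_left hPpos h1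
        have h3 := Nat.pow_right_injective (by omega : 2 ≤ Kk) h2
        have h4 : j1 = j2 := Fin.ext (by omega)
        rw [h4]
      · exfalso; omega
      · exfalso; omega
      · have h1 : P * Kk ^ (j1.val + 1) = P * Kk ^ (j2.val + 1) := by omega
        have h2 := Nat.eq_of_mul_eq_mul_left hPpos h1
        have h3 := Nat.pow_right_injective (by omega : 2 ≤ Kk) h2
        have h4 : j1 = j2 := Fin.ext (by omega)
        rw [h4]
  have hσinj : Function.Injective σ := by
    intro i1 i2 h
    apply hνinj
    rw [← hvσ, ← hvσ, h]
  obtain ⟨S, hS⟩ : ∃ S : Finset G, S = Finset.image σ Finset.univ := ⟨_, rfl⟩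
  have hmemS : ∀ i, σ i ∈ S := by
    intro i; rw [hS]; exact Finset.mem_image_of_mem σ (Finset.mem_univ i)
  have hQcast : (Q : ℤ) = (Kk : ℤ) * (N : ℤ) + 1 := by
    exact_mod_cast congrArg (Nat.cast (R := ℤ)) hQ
  have hxmem : x ∈ Subgroup.closure (S : Set G) := by
    have h1 : x ^ (Q : ℤ) ∈ Subgroup.closure (S : Set G) :=
      hσ3 ▸ Subgroup.subset_closure (hmemS (.inl (false, true)))
    have h2 : x ^ (N : ℤ) ∈ Subgroup.closure (S : Set G) :=
      hσ1 ▸ Subgroup.subset_closure (hmemS (.inl (true, true)))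
    have h3 := mul_mem h1 (zpow_mem h2 (-(Kk : ℤ)))
    have h4 : x ^ (Q : ℤ) * (x ^ (N : ℤ)) ^ (-(Kk : ℤ)) = x := by
      rw [← zpow_mul, ← zpow_add]
      have h5 : (Q : ℤ) + (N : ℤ) * -(Kk : ℤ) = 1 := by linarith only [hQcast]
      rw [h5, zpow_one]
    rwa [h4] at h3
  have hfmem : ∀ j, f j ∈ Subgroup.closure (S : Set G) := by
    intro j
    have h1 : y j ∈ Subgroup.closure (S : Set G) :=
      hσ5 j ▸ Subgroup.subset_closure (hmemS (.inr (j, true)))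
    have h2 : x ^ (-((P * Kk ^ (j.val + 1) : ℕ) : ℤ)) * y j = f j := by
      rw [hy, ← mul_assoc, ← zpow_add, neg_add_cancel, zpow_zero, one_mul]
    rw [← h2]
    exact mul_mem (zpow_mem hxmem _) h1
  have hclos : Subgroup.closure (S : Set G) = ⊤ := by
    rw [eq_top_iff, ← hT, Subgroup.closure_le]
    intro t ht
    have hgeq : gen (Fin.cast hr.symm (T.equivFin ⟨t, ht⟩)) = t := by
      rw [hgen]; simp
    have hmem : gen (Fin.cast hr.symm (T.equivFin ⟨t, ht⟩)) ∈ Subgroup.closure (S : Set G) := by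
      obtain ⟨j0, hj0⟩ : ∃ j0 : Fin r, j0 = Fin.cast hr.symm (T.equivFin ⟨t, ht⟩) := ⟨_, rfl⟩
      rw [← hj0]
      have h2 : f j0 * x ^ (v (gen j0)) = gen j0 := by
        rw [hf, mul_assoc, ← zpow_add, neg_add_cancel, zpow_zero, mul_one]
      rw [← h2]
      exact mul_mem (hfmem _) (zpow_mem hxmem _)
    rw [hgeq] at hmem
    exact hmem
  have hsymm : ∀ s ∈ S, s⁻¹ ∈ S := by
    intro s hs
    rw [hS, Finset.mem_image] at hs
    obtain ⟨i, _, rfl⟩ := hs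
    rw [hS, Finset.mem_image]
    rcases i with ⟨u, t⟩ | ⟨j, t⟩
    · refine ⟨.inl (u, !t), Finset.mem_univ _, ?_⟩
      cases u <;> cases t <;>
        simp only [hσ1, hσ2, hσ3, hσ4, Bool.not_true, Bool.not_false, ← zpow_neg, neg_neg]
    · refine ⟨.inr (j, !t), Finset.mem_univ _, ?_⟩
      cases t <;>
        simp only [hσ5, hσ6, Bool.not_true, Bool.not_false, inv_inv]
  -- key length bound
  have key : ∀ w : List G, (∀ s ∈ w, s ∈ S) → w.prod = g → M < w.length := by
    intro w hw hwp
    by_contra hMw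
    push_neg at hMw
    obtain ⟨c, hcdef⟩ : ∃ c : ((Bool × Bool) ⊕ (Fin r × Bool)) → ℕ,
        c = fun i => w.count (σ i) := ⟨_, rfl⟩
    have hsub : w.toFinset ⊆ S := fun s hs => hw s (List.mem_toFinset.mp hs)
    have hprodc : g = ∏ i, σ i ^ c i := by
      rw [hcdef, ← hwp, Finset.prod_list_count_of_subset w S hsub, hS,
        Finset.prod_image (fun i _ j _ h => hσinj h)]
    have hlenc : w.length = ∑ i, c i := by
      rw [hcdef, ← List.sum_toFinset_count_eq_length w,
        Finset.sum_subset hsub (fun s _ hs =>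
          List.count_eq_zero_of_not_mem (fun h => hs (List.mem_toFinset.mpr h))), hS,
        Finset.sum_image (fun i _ j _ h => hσinj h)]
    obtain ⟨A, hA⟩ : ∃ A : ℤ,
        A = (c (.inl (true, true)) : ℤ) - c (.inl (true, false)) := ⟨_, rfl⟩
    obtain ⟨B, hB⟩ : ∃ B : ℤ,
        B = (c (.inl (false, true)) : ℤ) - c (.inl (false, false)) := ⟨_, rfl⟩
    obtain ⟨bco, hbco⟩ : ∃ bco : Fin r → ℤ,
        bco = fun j => (c (.inr (j, true)) : ℤ) - c (.inr (j, false)) := ⟨_, rfl⟩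
    have hsum_split : ∑ i, c i =
        (c (.inl (true, true)) + c (.inl (true, false)) + c (.inl (false, true)) +
          c (.inl (false, false))) +
        ∑ j : Fin r, (c (.inr (j, true)) + c (.inr (j, false))) := by
      rw [Fintype.sum_sum_type]
      congr 1
      · rw [Fintype.sum_prod_type, Fintype.sum_bool, Fintype.sum_bool, Fintype.sum_bool]
        omega
      · rw [Fintype.sum_prod_type]
        exact Finset.sum_congr rfl fun j _ => by rw [Fintype.sum_bool]
    obtain ⟨sb, hsb⟩ : ∃ sb : ℕ, sb = ∑ j : Fin r, (bco j).natAbs := ⟨_, rfl⟩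
    have hbound : A.natAbs + B.natAbs + sb ≤ M := by
      have h1 : A.natAbs ≤ c (.inl (true, true)) + c (.inl (true, false)) := by
        rw [hA]; omega
      have h2 : B.natAbs ≤ c (.inl (false, true)) + c (.inl (false, false)) := by
        rw [hB]; omega
      have h3 : sb ≤ ∑ j : Fin r, (c (.inr (j, true)) + c (.inr (j, false))) := by
        rw [hsb]
        refine Finset.sum_le_sum fun j _ => ?_
        simp only [hbco]
        omega
      have h4 : (c (.inl (true, true)) + c (.inl (true, false)) + c (.inl (false, true)) +
          c (.inl (false, false))) +
          (∑ j : Fin r, (c (.inr (j, true)) + c (.inr (j, false)))) ≤ M := by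
        rw [← hsum_split, ← hlenc]; exact hMw
      obtain ⟨s2, hs2⟩ : ∃ s2 : ℕ,
          s2 = ∑ j : Fin r, (c (.inr (j, true)) + c (.inr (j, false))) := ⟨_, rfl⟩
      rw [← hs2] at h3 h4
      omega
    have habsAB : |A| + |B| ≤ (M : ℤ) := by
      rw [Int.abs_eq_natAbs, Int.abs_eq_natAbs]
      exact_mod_cast (by omega : A.natAbs + B.natAbs ≤ M)
    have hfac1 : (∏ u : Bool × Bool, σ (.inl u) ^ c (.inl u)) =
        x ^ ((N : ℤ) * A + (Q : ℤ) * B) := by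
      rw [Fintype.prod_prod_type, Fintype.prod_bool, Fintype.prod_bool, Fintype.prod_bool,
        hσ1, hσ2, hσ3, hσ4, aux_pair x (N : ℤ), aux_pair x (Q : ℤ), ← zpow_add]
      congr 1
      rw [hA, hB]
    have hfac2 : (∏ q : Fin r × Bool, σ (.inr q) ^ c (.inr q)) =
        x ^ (∑ j : Fin r, ((P * Kk ^ (j.val + 1) : ℕ) : ℤ) * bco j) *
          ∏ j : Fin r, f j ^ bco j := by
      rw [Fintype.prod_prod_type]
      have hterm : ∀ j : Fin r, (∏ t : Bool, σ (.inr (j, t)) ^ c (.inr (j, t))) =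
          x ^ (((P * Kk ^ (j.val + 1) : ℕ) : ℤ) * bco j) * f j ^ bco j := by
        intro j
        rw [Fintype.prod_bool, hσ5, hσ6, aux_pair2 (y j), hy, mul_zpow, ← zpow_mul, hbco]
      rw [Finset.prod_congr rfl fun j _ => hterm j, Finset.prod_mul_distrib, aux_prod_zpow]
    have hg_eq : g = x ^ ((N : ℤ) * A + (Q : ℤ) * B +
        ∑ j : Fin r, ((P * Kk ^ (j.val + 1) : ℕ) : ℤ) * bco j) * ∏ j : Fin r, f j ^ bco j := by
      rw [hprodc, Fintype.prod_sum_type, hfac1, hfac2, ← mul_assoc, ← zpow_add]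
    have hvE : (N : ℤ) * A + (Q : ℤ) * B +
        (∑ j : Fin r, ((P * Kk ^ (j.val + 1) : ℕ) : ℤ) * bco j) = d := by
      have h0 := congrArg v hg_eq
      rw [v_mul, v_zpow, v_x, mul_one] at h0
      have h1 : v (∏ j : Fin r, f j ^ bco j) = ∑ j : Fin r, (bco j) * v (f j) := by
        rw [hvdef]
        show Multiplicative.toAdd (Φ (∏ j : Fin r, f j ^ bco j)) = _
        rw [map_prod, toAdd_prod]
        refine Finset.sum_congr rfl fun j _ => ?_
        rw [map_zpow, toAdd_zpow, smul_eq_mul]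
      have h2 : ∑ j : Fin r, (bco j) * v (f j) = 0 :=
        Finset.sum_eq_zero fun j _ => by rw [hvf, mul_zero]
      rw [h1, h2, add_zero] at h0
      rw [hd, h0]
    by_cases hex : ∃ j : Fin r, bco j ≠ 0
    · obtain ⟨j0, hj0⟩ := hex
      obtain ⟨s', hs'⟩ : ∃ s' : ℤ, s' = ∑ j : Fin r, bco j * (Kk : ℤ) ^ (j.val) := ⟨_, rfl⟩
      have hsum_eq : (∑ j : Fin r, ((P * Kk ^ (j.val + 1) : ℕ) : ℤ) * bco j) =
          (P : ℤ) * (Kk : ℤ) * s' := by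
        rw [hs', Finset.mul_sum]
        exact Finset.sum_congr rfl fun j _ => by push_cast; ring
      have hs'0 : s' ≠ 0 := by
        obtain ⟨bfun, hbfun⟩ : ∃ bfun : ℕ → ℤ,
            bfun = fun i => if h : i < r then bco ⟨i, h⟩ else 0 := ⟨_, rfl⟩
        have hval : ∀ j : Fin r, bfun j.val = bco j := by
          intro j; rw [hbfun]; simp [j.isLt]
        have heq : s' = ∑ i ∈ Finset.range r, bfun i * (Kk : ℤ) ^ i := by
          rw [hs', ← Fin.sum_univ_eq_sum_range (fun i => bfun i * (Kk : ℤ) ^ i) r]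
          exact Finset.sum_congr rfl fun j _ => by rw [hval]
        rw [heq]
        apply aux_baseK
        · have hsum2 : (∑ i ∈ Finset.range r, (bfun i).natAbs) = sb := by
            rw [hsb, ← Fin.sum_univ_eq_sum_range (fun i => (bfun i).natAbs) r]
            exact Finset.sum_congr rfl fun j _ => by rw [hval]
          rw [hsum2]
          omega
        · exact ⟨j0.val, j0.isLt, by rw [hval j0]; exact hj0⟩
      have hdd : d = (N : ℤ) * A + (Q : ℤ) * B + (P : ℤ) * (Kk : ℤ) * s' := by
        rw [← hvE, hsum_eq]
      have hQZ : (0 : ℤ) < (Q : ℤ) := by exact_mod_cast hQ0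
      have hNZ : (0 : ℤ) < (N : ℤ) := by exact_mod_cast (by omega : 0 < N)
      have habs1 : |(N : ℤ) * A + (Q : ℤ) * B| ≤ (Q : ℤ) * M := by
        have hNQ2 : (N : ℤ) ≤ (Q : ℤ) := by exact_mod_cast hNQ.le
        calc |(N : ℤ) * A + (Q : ℤ) * B| ≤ |(N : ℤ) * A| + |(Q : ℤ) * B| := abs_add_le _ _
          _ = (N : ℤ) * |A| + (Q : ℤ) * |B| := by
              rw [abs_mul, abs_mul, abs_of_nonneg hNZ.le, abs_of_nonneg hQZ.le]
          _ ≤ (Q : ℤ) * |A| + (Q : ℤ) * |B| := by nlinarith only [abs_nonneg A, hNQ2]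
          _ = (Q : ℤ) * (|A| + |B|) := by ring
          _ ≤ (Q : ℤ) * M := by nlinarith only [habsAB, hQZ]
      have habs2 : (P : ℤ) * (Kk : ℤ) ≤ |(P : ℤ) * (Kk : ℤ) * s'| := by
        rw [abs_mul]
        have h1 : (1 : ℤ) ≤ |s'| := Int.one_le_abs hs'0
        have h2 : (0 : ℤ) ≤ (P : ℤ) * (Kk : ℤ) := by positivity
        rw [abs_of_nonneg h2]
        nlinarith only [h1, h2]
      have habs3 : |(P : ℤ) * (Kk : ℤ) * s'| ≤ |d| + |(N : ℤ) * A + (Q : ℤ) * B| := by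
        have hrw : (P : ℤ) * (Kk : ℤ) * s' = d + -((N : ℤ) * A + (Q : ℤ) * B) := by
          linarith only [hdd]
        rw [hrw]
        calc |d + -((N : ℤ) * A + (Q : ℤ) * B)| ≤ |d| + |-((N : ℤ) * A + (Q : ℤ) * B)| :=
              abs_add_le _ _
          _ = |d| + |(N : ℤ) * A + (Q : ℤ) * B| := by rw [abs_neg]
      have e1 : (P : ℤ) * (Kk : ℤ) = (Q : ℤ) * ((N : ℤ) * (Kk : ℤ)) := by
        have hPc : (P : ℤ) = (N : ℤ) * (Q : ℤ) := by
          exact_mod_cast congrArg (Nat.cast (R := ℤ)) hP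
        rw [hPc]; ring
      have hNc : (N : ℤ) = (M : ℤ) + (D : ℤ) + 1 := by
        exact_mod_cast congrArg (Nat.cast (R := ℤ)) hN
      have hKc : (1 : ℤ) ≤ (Kk : ℤ) := by exact_mod_cast (by omega : 1 ≤ Kk)
      have e2 : (M : ℤ) + (D : ℤ) + 1 ≤ (N : ℤ) * (Kk : ℤ) := by nlinarith only [hNc, hKc, hNZ]
      have e3 : (Q : ℤ) * ((D : ℤ) + 1) ≤ (Q : ℤ) * ((N : ℤ) * (Kk : ℤ)) - (Q : ℤ) * M := by
        have h9 : (0 : ℤ) ≤ (Q : ℤ) * ((N : ℤ) * (Kk : ℤ) - (M : ℤ) - ((D : ℤ) + 1)) :=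
          mul_nonneg hQZ.le (by linarith [e2])
        nlinarith only [h9]
      have e6 : (Q : ℤ) ≤ (Q : ℤ) * ((D : ℤ) + 1) := by
        nlinarith only [hQZ, (by positivity : (0 : ℤ) ≤ (D : ℤ))]
      have e4 : (N : ℤ) + 1 ≤ (Q : ℤ) := by exact_mod_cast (by omega : N + 1 ≤ Q)
      have hfin : (P : ℤ) * (Kk : ℤ) ≤ (D : ℤ) + (Q : ℤ) * M := by
        rw [hD]
        linarith only [habs2, habs3, habs1]
      rw [e1] at hfin
      linarith only [hfin, e3, e6, e4, hNc]
    · push_neg at hex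
      have hg2 : g = x ^ ((N : ℤ) * A + (Q : ℤ) * B) := by
        rw [hg_eq, Finset.sum_eq_zero fun j _ => by rw [hex j, mul_zero], add_zero,
          Finset.prod_eq_one fun j _ => by rw [hex j, zpow_zero], mul_one]
      have hE2 : (N : ℤ) * A + (Q : ℤ) * B = d := by
        rw [← hvE, Finset.sum_eq_zero fun j _ => by rw [hex j, mul_zero], add_zero]
      have hd0 : d ≠ 0 := by
        intro h0
        apply hg
        rw [hg2, hE2, h0, zpow_zero]
      have hNc : (N : ℤ) = (M : ℤ) + (D : ℤ) + 1 := by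
        exact_mod_cast congrArg (Nat.cast (R := ℤ)) hN
      have hD1 : (1 : ℤ) ≤ (D : ℤ) := by rw [hD]; exact Int.one_le_abs hd0
      have hdvd : (N : ℤ) ∣ (d - B) :=
        ⟨A + (Kk : ℤ) * B, by linear_combination B * hQcast - hE2⟩
      have habsB : |B| ≤ (M : ℤ) := by linarith only [habsAB, abs_nonneg A]
      have habsd : |d - B| < (N : ℤ) := by
        calc |d - B| ≤ |d| + |B| := abs_sub _ _
          _ < (N : ℤ) := by rw [← hD]; linarith only [habsB, hNc]
      have hBd : B = d := by
        have h0 := Int.eq_zero_of_abs_lt_dvd hdvd habsd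
        linarith only [h0]
      have hAeq : (N : ℤ) * (A + d * (Kk : ℤ)) = 0 := by
        rw [hBd] at hE2
        linear_combination hE2 - d * hQcast
      have hA2 : A = -(d * (Kk : ℤ)) := by
        have hN0 : (N : ℤ) ≠ 0 := by
          exact_mod_cast (by omega : N ≠ 0)
        rcases mul_eq_zero.mp hAeq with h1 | h1
        · exact absurd h1 hN0
        · linarith only [h1]
      have habsA : |A| ≤ (M : ℤ) := by linarith only [habsAB, abs_nonneg B]
      have hKA : (Kk : ℤ) ≤ |A| := by
        rw [hA2, abs_neg, abs_mul]
        have h1 : (1 : ℤ) ≤ |d| := Int.one_le_abs hd0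
        have h2 : |(Kk : ℤ)| = (Kk : ℤ) := abs_of_nonneg (by positivity)
        rw [h2]
        nlinarith only [h1, (by positivity : (0 : ℤ) ≤ (Kk : ℤ))]
      have hKkc : (Kk : ℤ) = (M : ℤ) + 1 := by
        exact_mod_cast congrArg (Nat.cast (R := ℤ)) hKk
      linarith only [hKA, habsA, hKkc]
  -- conclude
  have hSsubsymm : (↑S : Set G)⁻¹ ⊆ ↑S := by
    intro a ha
    have h1 : a⁻¹ ∈ S := by
      rw [Set.mem_inv] at ha
      exact_mod_cast ha
    have h2 := hsymm _ h1
    rw [inv_inv] at h2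
    exact_mod_cast h2
  have hgmem : g ∈ Submonoid.closure (↑S : Set G) := by
    have h1 : g ∈ (Subgroup.closure (↑S : Set G)).toSubmonoid := by
      rw [hclos]
      simp
    rw [Subgroup.closure_toSubmonoid] at h1
    rwa [Set.union_eq_self_of_subset_right hSsubsymm] at h1
  obtain ⟨l, hl, hlp⟩ := Submonoid.exists_list_of_mem_closure hgmem
  have hne : {m : ℕ | ∃ w : List G, (∀ s ∈ w, s ∈ S) ∧ w.length = m ∧ w.prod = g}.Nonempty :=
    ⟨l.length, l, fun s hs => by exact_mod_cast hl s hs, rfl, hlp⟩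
  obtain ⟨w, hw, hwl, hwp⟩ := Nat.sInf_mem hne
  refine ⟨S, ⟨hsymm, hclos⟩, ?_⟩
  calc M < w.length := key w hw hwp
    _ = wordLen S g := hwl

set_option maxHeartbeats 2000000 in
/-- If `G` is an infinite finitely generated abelian group, then `G_bound` is
trivial. -/
theorem stmt8 (G : Type*) [CommGroup G] [Group.FG G] [Infinite G] :
    ∀ g : G, g ≠ 1 → ∀ M : ℕ, 0 < M →
      ∃ S : Finset G, IsSymmGen S ∧ M < wordLen S g := by
  classical
  intro g hg M hM
  obtain ⟨n, ι, fι, p, hp, e, ⟨eq⟩⟩ := AddCommGroup.equiv_free_prod_directSum_zmod (Additive G)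
  have hn : n ≠ 0 := by
    rintro rfl
    haveI : ∀ i, NeZero (p i ^ e i) := fun i => ⟨pow_ne_zero _ (hp i).pos.ne'⟩
    haveI : Finite ((Fin 0 →₀ ℤ) × DirectSum ι fun i => ZMod (p i ^ e i)) := by
      haveI : Finite (Fin 0 →₀ ℤ) := Finite.of_subsingleton
      haveI : Finite (DirectSum ι fun i => ZMod (p i ^ e i)) :=
        Finite.of_equiv _ (DirectSum.addEquivProd fun i => ZMod (p i ^ e i)).symm.toEquiv
      infer_instance
    have : Finite (Additive G) := Finite.of_equiv _ eq.toEquiv.symm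
    exact not_finite (Additive G)
  obtain ⟨i0⟩ : Nonempty (Fin n) := ⟨⟨0, Nat.pos_of_ne_zero hn⟩⟩
  set ψ : Additive G →+ ℤ :=
    (Finsupp.applyAddHom i0).comp ((AddMonoidHom.fst _ _).comp eq.toAddMonoidHom) with hψ
  set x : G := Additive.toMul (eq.symm (Finsupp.single i0 1, 0)) with hxdef
  have hx : Multiplicative.toAdd ((AddMonoidHom.toMultiplicativeRight ψ) x) = 1 := by
    simp [hψ, hxdef]
  obtain ⟨T, hT⟩ := Group.FG.out (G := G)
  exact aux_main (AddMonoidHom.toMultiplicativeRight ψ) x hx T hT g hg M hM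
end

section
/- Let D₈ be the dihedral group of order 8 and z the nontrivial element of its center, and let G = ℤ × D₈. Then for every finite symmetric generating set S of G one has l_S((0,z)) ≤ 4; consequently (0,z) ∈ G_bound and G_bound is nontrivial. -/
lemma center_d8 (z : DihedralGroup 4) (hzc : ∀ g, g * z = z * g) :
    z = 1 ∨ z = DihedralGroup.r 2 := by
  revert hzc; revert z; decide

lemma comm_d8 (a b : DihedralGroup 4) :
    a * b * a⁻¹ * b⁻¹ = 1 ∨ a * b * a⁻¹ * b⁻¹ = DihedralGroup.r 2 := by
  revert a b; decide

lemma comm_pair (s t : Multiplicative ℤ × DihedralGroup 4) :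
    s * t * s⁻¹ * t⁻¹ = (1, s.2 * t.2 * s.2⁻¹ * t.2⁻¹) := by
  ext
  · show s.1 * t.1 * s.1⁻¹ * t.1⁻¹ = 1
    rw [mul_comm s.1 t.1]; group
  · rfl

/-- For `G = ℤ × D₈` with `z` the nontrivial central element of `D₈`, the
element `(0, z)` has word length at most `4` for every finite symmetric
generating set; hence `(0, z) ∈ G_bound` and `G_bound` is nontrivial. -/
theorem stmt11 (z : DihedralGroup 4) (hz : z ≠ 1)
    (hzc : z ∈ Subgroup.center (DihedralGroup 4)) :
    (∀ S : Finset (Multiplicative ℤ × DihedralGroup 4), IsSymmGen S →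
      wordLen S (1, z) ≤ 4) ∧
    ((1, z) : Multiplicative ℤ × DihedralGroup 4) ∈
      GBound (Multiplicative ℤ × DihedralGroup 4) ∧
    GBound (Multiplicative ℤ × DihedralGroup 4) ≠ {1} := by
  have hzr : z = DihedralGroup.r 2 := by
    rcases center_d8 z (fun g => (Subgroup.mem_center_iff.mp hzc g)) with h | h
    · exact absurd h hz
    · exact h
  have main : ∀ S : Finset (Multiplicative ℤ × DihedralGroup 4), IsSymmGen S →
      wordLen S (1, z) ≤ 4 := by
    intro S ⟨hsymm, hgen⟩
    -- there exist two non-commuting elements of S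
    have hnc : ∃ s ∈ S, ∃ t ∈ S, s * t ≠ t * s := by
      by_contra h
      push_neg at h
      have hcomm : ∀ x y : Multiplicative ℤ × DihedralGroup 4,
          x ∈ Subgroup.closure (S : Set _) → y ∈ Subgroup.closure (S : Set _) →
          Commute x y := by
        intro x y hx hy
        induction hx, hy using Subgroup.closure_induction₂ with
        | mem a b ha hb => exact h a ha b hb
        | one_left b hb => exact Commute.one_left _
        | one_right a ha => exact Commute.one_right _
        | mul_left a b c _ _ _ h1 h2 => exact h1.mul_left h2
        | mul_right a b c _ _ _ h1 h2 => exact h1.mul_right h2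
        | inv_left a b _ _ h1 => exact h1.inv_left
        | inv_right a b _ _ h1 => exact h1.inv_right
      have h1 : ((1, DihedralGroup.r 1) : Multiplicative ℤ × DihedralGroup 4) *
          (1, DihedralGroup.sr 0) = (1, DihedralGroup.sr 0) * (1, DihedralGroup.r 1) := by
        apply hcomm <;> simp [hgen]
      have : (DihedralGroup.r 1 * DihedralGroup.sr 0 : DihedralGroup 4)
          = DihedralGroup.sr 0 * DihedralGroup.r 1 := congrArg Prod.snd h1
      revert this; decide
    obtain ⟨s, hs, t, ht, hst⟩ := hnc
    have hprod : s * t * s⁻¹ * t⁻¹ = (1, z) := by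
      rw [comm_pair]
      rcases comm_d8 s.2 t.2 with h | h
      · exfalso
        apply hst
        have : s * t * s⁻¹ * t⁻¹ = 1 := by rw [comm_pair, h]; rfl
        exact mul_inv_eq_iff_eq_mul.mp (mul_inv_eq_one.mp this)
      · rw [h, hzr]
    apply Nat.sInf_le
    refine ⟨[s, t, s⁻¹, t⁻¹], ?_, rfl, ?_⟩
    · intro x hx
      simp only [List.mem_cons, List.not_mem_nil, or_false] at hx
      rcases hx with rfl | rfl | rfl | rfl
      · exact hs
      · exact ht
      · exact hsymm s hs
      · exact hsymm t ht
    · simpa [mul_assoc] using hprod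
  refine ⟨main, ⟨4, by norm_num, main⟩, ?_⟩
  intro h
  have hb : ((1, z) : Multiplicative ℤ × DihedralGroup 4) ∈ GBound _ :=
    ⟨4, by norm_num, main⟩
  rw [h] at hb
  have : ((1, z) : Multiplicative ℤ × DihedralGroup 4) = 1 := hb
  exact hz (congrArg Prod.snd this)
end

section
/- Let p be a prime, H a group in which every element h satisfies h^p = e, and A a finite group whose order is not divisible by p. Suppose G = H × A is finitely generated. Then for every element a ∈ A and every finite symmetric generating set S of G one has l_S((e,a)) ≤ p·|A|²; consequently {e} × A ⊆ G_bound. -/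
/-- Any word over `T` can be shortened to a word over `T` of length at most
`Nat.card A` with the same product. -/
lemma shorten_word {A : Type*} [Group A] [Finite A] (T : Finset A) :
    ∀ (L : ℕ) (w : List A), w.length ≤ L → (∀ s ∈ w, s ∈ T) →
      ∃ v : List A, (∀ s ∈ v, s ∈ T) ∧ v.length ≤ Nat.card A ∧ v.prod = w.prod := by
  intro L
  induction L with
  | zero =>
    intro w hw hmem
    exact ⟨w, hmem, by omega, rfl⟩
  | succ L ih =>
    intro w hw hmem
    by_cases hlen : w.length ≤ Nat.card A
    · exact ⟨w, hmem, hlen, rfl⟩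
    push_neg at hlen
    have := Fintype.ofFinite A
    have hcard : Fintype.card A < Fintype.card (Fin (w.length + 1)) := by
      simp only [Fintype.card_fin]
      rw [← Nat.card_eq_fintype_card]; omega
    obtain ⟨i, j, hne, heq⟩ := Fintype.exists_ne_map_eq_of_card_lt
      (fun i : Fin (w.length + 1) => (w.take i).prod) hcard
    wlog hij : (i : ℕ) < (j : ℕ) generalizing i j
    · exact this j i hne.symm heq.symm (by omega)
    set v := w.take i ++ w.drop j with hv
    have hvm : ∀ s ∈ v, s ∈ T := by
      intro s hs
      rcases List.mem_append.1 hs with h | h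
      · exact hmem s (List.take_subset _ _ h)
      · exact hmem s (List.drop_subset _ _ h)
    have hji : (j : ℕ) ≤ w.length := by omega
    have hvl : v.length ≤ L := by
      simp only [hv, List.length_append, List.length_take, List.length_drop]
      omega
    have hvp : v.prod = w.prod := by
      have h1 : w = w.take j ++ w.drop j := (List.take_append_drop j w).symm
      calc v.prod = (w.take i).prod * (w.drop j).prod := List.prod_append
        _ = (w.take j).prod * (w.drop j).prod := by rw [heq]
        _ = w.prod := by conv_rhs => rw [h1, List.prod_append]
    obtain ⟨v', h1, h2, h3⟩ := ih v hvl hvm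
    exact ⟨v', h1, h2, h3.trans hvp⟩

/-- Every element of a group generated by a symmetric set `T` is a product of
a word over `T`. -/
lemma word_of_mem_closure {A : Type*} [Group A] (T : Finset A)
    (hsym : ∀ s ∈ T, s⁻¹ ∈ T) (htop : Subgroup.closure (T : Set A) = ⊤) (a : A) :
    ∃ w : List A, (∀ s ∈ w, s ∈ T) ∧ w.prod = a := by
  have ha : a ∈ Subgroup.closure (T : Set A) := htop ▸ Subgroup.mem_top a
  have ha0 : a ∈ (Subgroup.closure (T : Set A)).toSubmonoid := ha
  rw [Subgroup.closure_toSubmonoid] at ha0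
  have ha' : a ∈ Submonoid.closure ((T : Set A) ∪ (T : Set A)⁻¹) := ha0
  obtain ⟨l, hl, hlp⟩ := Submonoid.exists_list_of_mem_closure ha'
  refine ⟨l, fun s hs => ?_, hlp⟩
  rcases hl s hs with h | h
  · exact h
  · have := hsym s⁻¹ (by simpa using h)
    simpa using this

/-- A word over `A` consisting of second coordinates of elements of `S` can be
lifted to a word over `S`. -/
lemma lift_word {H A : Type*} [Group H] [Group A] (S : Finset (H × A)) :
    ∀ v : List A, (∀ t ∈ v, ∃ s ∈ S, s.2 = t) →
      ∃ u : List (H × A), (∀ s ∈ u, s ∈ S) ∧ u.map Prod.snd = v := by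
  intro v
  induction v with
  | nil => exact fun _ => ⟨[], by simp, by simp⟩
  | cons t v ih =>
    intro hv
    obtain ⟨s, hs, hst⟩ := hv t (List.mem_cons_self)
    obtain ⟨u, hu1, hu2⟩ := ih fun t ht => hv t (List.mem_cons_of_mem _ ht)
    refine ⟨s :: u, ?_, by simp [hu2, hst]⟩
    intro x hx
    rcases List.mem_cons.1 hx with h | h
    · exact h ▸ hs
    · exact hu1 x h

/-- If every element of `H` satisfies `h^p = 1` for a prime `p` not dividing
`|A|`, and `G = H × A` is finitely generated, then every `(e, a)` has word
length at most `p·|A|²` for every finite symmetric generating set of `G`;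
hence `{e} × A ⊆ G_bound`. -/
theorem stmt13 (p : ℕ) (hp : p.Prime) (H A : Type*) [Group H] [Group A]
    [Finite A] (hH : ∀ h : H, h ^ p = 1) (hA : ¬ p ∣ Nat.card A)
    [Group.FG (H × A)] :
    ∀ a : A,
      (∀ S : Finset (H × A), IsSymmGen S →
        wordLen S ((1, a) : H × A) ≤ p * (Nat.card A) ^ 2) ∧
      ((1, a) : H × A) ∈ GBound (H × A) := by
  have hn : 0 < Nat.card A := Nat.card_pos
  have hp0 : 0 < p := hp.pos
  have hM : 0 < p * (Nat.card A) ^ 2 := by positivity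
  have key : ∀ a : A, ∀ S : Finset (H × A), IsSymmGen S →
      wordLen S ((1, a) : H × A) ≤ p * (Nat.card A) ^ 2 := by
    intro a S hS
    classical
    obtain ⟨hsym, htop⟩ := hS
    -- c with c ^ p = a
    have hcop : (Nat.card A).Coprime p := ((hp.coprime_iff_not_dvd).2 hA).symm
    obtain ⟨c, hc⟩ := (powCoprime hcop).surjective a
    -- T = image of S under snd generates A and is symmetric
    set T : Finset A := S.image Prod.snd with hT
    have hTsym : ∀ t ∈ T, t⁻¹ ∈ T := by
      intro t ht
      rw [hT] at ht
      obtain ⟨s, hs, rfl⟩ := Finset.mem_image.1 ht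
      exact Finset.mem_image.2 ⟨s⁻¹, hsym s hs, rfl⟩
    have hTtop : Subgroup.closure (T : Set A) = ⊤ := by
      have : (T : Set A) = (MonoidHom.snd H A) '' (S : Set (H × A)) := by
        simp [hT, Finset.coe_image]
      rw [this, ← MonoidHom.map_closure, htop, ← MonoidHom.range_eq_map]
      exact MonoidHom.range_eq_top_of_surjective _ Prod.snd_surjective
    -- short word for c over T
    obtain ⟨w0, hw0, hw0p⟩ := word_of_mem_closure T hTsym hTtop c
    obtain ⟨v, hvT, hvlen, hvp⟩ := shorten_word T w0.length w0 le_rfl hw0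
    -- lift to word over S
    obtain ⟨u, huS, humap⟩ := lift_word S v (fun t ht => by
      obtain ⟨s, hs, hst⟩ := Finset.mem_image.1 (hT ▸ hvT t ht)
      exact ⟨s, hs, hst⟩)
    set g : H × A := u.prod with hg
    have hg2 : g.2 = c := by
      have : (MonoidHom.snd H A) u.prod = (u.map (MonoidHom.snd H A)).prod :=
        map_list_prod _ _
      simpa [hg, humap, hvp, hw0p] using this
    have hgp : g ^ p = ((1, a) : H × A) := by
      have : g ^ p = (g.1 ^ p, g.2 ^ p) := rfl
      rw [this, hH g.1, hg2]
      have : c ^ p = a := hc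
      rw [this]
    -- the word: u repeated p times
    set w : List (H × A) := (List.replicate p u).flatten with hw
    have hwS : ∀ s ∈ w, s ∈ S := by
      intro s hs
      obtain ⟨l, hl, hsl⟩ := List.mem_flatten.1 hs
      exact huS s ((List.eq_of_mem_replicate hl) ▸ hsl)
    have hwlen : w.length = p * u.length := by
      simp [hw, List.length_flatten, List.map_replicate, List.sum_replicate, smul_eq_mul]
    have hwp : w.prod = ((1, a) : H × A) := by
      rw [hw, List.prod_flatten, List.map_replicate, List.prod_replicate, ← hg, hgp]
    have hmem : w.length ∈ {n : ℕ | ∃ w' : List (H × A),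
        (∀ s ∈ w', s ∈ S) ∧ w'.length = n ∧ w'.prod = ((1, a) : H × A)} :=
      ⟨w, hwS, rfl, hwp⟩
    have hle := Nat.sInf_le hmem
    have hulen : u.length ≤ Nat.card A := by
      have := congrArg List.length humap
      simp only [List.length_map] at this
      omega
    calc wordLen S ((1, a) : H × A) ≤ w.length := hle
      _ = p * u.length := hwlen
      _ ≤ p * Nat.card A := Nat.mul_le_mul_left _ hulen
      _ ≤ p * (Nat.card A) ^ 2 := by nlinarith
  intro a
  exact ⟨key a, ⟨p * (Nat.card A) ^ 2, hM, key a⟩⟩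
end

section
/- Let d ≥ 1, let g ∈ ℤ^d be a nonzero element, and let l ≥ 1 be an integer. Then there exists a finite symmetric generating set E of ℤ^d such that l_E(g) = l + 1. -/
/-- Every nonzero element of `ℤ^d` can be given prescribed word length `l + 1`
by a suitable finite symmetric generating set. -/
theorem stmt15 (d : ℕ) (hd : 1 ≤ d) (g : Fin d → ℤ) (hg : g ≠ 0) (l : ℕ)
    (hl : 1 ≤ l) :
    ∃ E : Finset (Fin d → ℤ), IsSymmGenAdd E ∧ addWordLen E g = l + 1 := by
  classical
  obtain ⟨i, hi⟩ : ∃ i, g i ≠ 0 := by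
    by_contra h
    push_neg at h
    exact hg (funext h)
  set A : ℤ := |g i| with hA
  have hA1 : 1 ≤ A := by
    have := abs_pos.mpr hi
    omega
  set T : ℤ := A * ((l : ℤ) + 1) + 1 with hT
  set v : Fin d → ℤ := Pi.single i T with hv
  set u : Fin d → ℤ := (l : ℤ) • v - g with hu
  set E : Finset (Fin d → ℤ) :=
      ({v, -v, u, -u} : Finset (Fin d → ℤ)) ∪
        ((Finset.univ.erase i).image fun j => Pi.single j (1 : ℤ)) ∪
        ((Finset.univ.erase i).image fun j => Pi.single j (-1 : ℤ)) with hE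
  have hmemE : ∀ s : Fin d → ℤ, s ∈ E ↔
      s = v ∨ s = -v ∨ s = u ∨ s = -u ∨
        ∃ j, j ≠ i ∧ (s = Pi.single j 1 ∨ s = Pi.single j (-1)) := by
    intro s
    simp only [hE, Finset.mem_union, Finset.mem_insert, Finset.mem_singleton,
      Finset.mem_image, Finset.mem_erase, Finset.mem_univ, and_true]
    constructor
    · rintro (((h | h | h | h) | ⟨j, hj, rfl⟩) | ⟨j, hj, rfl⟩)
      · exact Or.inl h
      · exact Or.inr (Or.inl h)
      · exact Or.inr (Or.inr (Or.inl h))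
      · exact Or.inr (Or.inr (Or.inr (Or.inl h)))
      · exact Or.inr (Or.inr (Or.inr (Or.inr ⟨j, hj, Or.inl rfl⟩)))
      · exact Or.inr (Or.inr (Or.inr (Or.inr ⟨j, hj, Or.inr rfl⟩)))
    · rintro (rfl | rfl | rfl | rfl | ⟨j, hj, rfl | rfl⟩)
      · exact Or.inl (Or.inl (Or.inl rfl))
      · exact Or.inl (Or.inl (Or.inr (Or.inl rfl)))
      · exact Or.inl (Or.inl (Or.inr (Or.inr (Or.inl rfl))))
      · exact Or.inl (Or.inl (Or.inr (Or.inr (Or.inr rfl))))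
      · exact Or.inl (Or.inr ⟨j, hj, rfl⟩)
      · exact Or.inr ⟨j, hj, rfl⟩
  have hvi : v i = T := by simp [hv]
  have hui : u i = (l : ℤ) * T - g i := by
    simp [hu, hvi]
  -- counting lemma
  have key : ∀ w : List (Fin d → ℤ), (∀ s ∈ w, s ∈ E) →
      ∃ p q : ℤ, w.sum i = p * T + q * ((l : ℤ) * T - g i) ∧
        |p| + |q| ≤ (w.length : ℤ) := by
    intro w
    induction w with
    | nil => intro _; exact ⟨0, 0, by simp, by simp⟩
    | cons a t ih =>
      intro h
      obtain ⟨p, q, hpq, hlen⟩ := ih fun s hs => h s (List.mem_cons_of_mem _ hs)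
      have ha := (hmemE a).1 (h a (List.mem_cons_self))
      have hsum : (a :: t).sum i = a i + t.sum i := by simp [List.sum_cons]
      have hlen' : ((a :: t).length : ℤ) = (t.length : ℤ) + 1 := by
        simp [List.length_cons]
      rcases ha with rfl | rfl | rfl | rfl | ⟨j, hj, rfl | rfl⟩
      · refine ⟨p + 1, q, by rw [hsum, hvi, hpq]; ring, ?_⟩
        have := abs_add_le p 1
        simp only [abs_one] at this
        rw [hlen']; linarith
      · refine ⟨p - 1, q, by rw [hsum]; simp only [Pi.neg_apply, hvi]; rw [hpq]; ring, ?_⟩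
        have : |p - 1| ≤ |p| + 1 := by
          rw [sub_eq_add_neg]
          simpa using abs_add_le p (-1)
        rw [hlen']; linarith
      · refine ⟨p, q + 1, by rw [hsum, hui, hpq]; ring, ?_⟩
        have := abs_add_le q 1
        simp only [abs_one] at this
        rw [hlen']; linarith
      · refine ⟨p, q - 1, by rw [hsum]; simp only [Pi.neg_apply, hui]; rw [hpq]; ring, ?_⟩
        have : |q - 1| ≤ |q| + 1 := by
          rw [sub_eq_add_neg]
          simpa using abs_add_le q (-1)
        rw [hlen']; linarith
      · have hz : (Pi.single j (1 : ℤ) : Fin d → ℤ) i = 0 :=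
          Pi.single_eq_of_ne (Ne.symm hj) 1
        refine ⟨p, q, by rw [hsum, hz, hpq]; ring, ?_⟩
        rw [hlen']; linarith
      · have hz : (Pi.single j (-1 : ℤ) : Fin d → ℤ) i = 0 :=
          Pi.single_eq_of_ne (Ne.symm hj) (-1)
        refine ⟨p, q, by rw [hsum, hz, hpq]; ring, ?_⟩
        rw [hlen']; linarith
  -- upper bound: word of length l+1
  have hup : (l + 1) ∈
      {n : ℕ | ∃ w : List (Fin d → ℤ), (∀ s ∈ w, s ∈ E) ∧ w.length = n ∧ w.sum = g} := by
    refine ⟨List.replicate l v ++ [-u], ?_, ?_, ?_⟩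
    · intro s hs
      rw [List.mem_append] at hs
      rcases hs with hs | hs
      · rw [List.eq_of_mem_replicate hs]
        exact (hmemE v).2 (Or.inl rfl)
      · simp only [List.mem_singleton] at hs
        subst hs
        exact (hmemE _).2 (Or.inr (Or.inr (Or.inr (Or.inl rfl))))
    · simp
    · rw [List.sum_append, List.sum_replicate, List.sum_singleton]
      have : (l : ℤ) • v = l • v := natCast_zsmul v l
      rw [hu, ← this]
      abel
  -- lower bound
  have hlow : ∀ n ∈
      {n : ℕ | ∃ w : List (Fin d → ℤ), (∀ s ∈ w, s ∈ E) ∧ w.length = n ∧ w.sum = g},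
      l + 1 ≤ n := by
    rintro n ⟨w, hw, rfl, hws⟩
    by_contra hn
    push_neg at hn
    obtain ⟨p, q, hpq, hlen⟩ := key w hw
    rw [hws] at hpq
    have hql : |p| + |q| ≤ (l : ℤ) := by
      have : (w.length : ℤ) ≤ (l : ℤ) := by exact_mod_cast Nat.lt_succ_iff.mp hn
      linarith
    have h1 : g i * (1 + q) = T * (p + q * (l : ℤ)) := by linear_combination hpq
    have h2 : |g i * (1 + q)| ≤ A * ((l : ℤ) + 1) := by
      rw [abs_mul, ← hA]
      have h3 : |1 + q| ≤ 1 + |q| := abs_add_le 1 q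
      have h4 : |q| ≤ (l : ℤ) := by
        have := abs_nonneg p
        linarith
      nlinarith [abs_nonneg q]
    by_cases hz : p + q * (l : ℤ) = 0
    · have h0 : g i * (1 + q) = 0 := by rw [h1, hz, mul_zero]
      have hq : q = -1 := by
        rcases mul_eq_zero.mp h0 with h | h
        · exact absurd h hi
        · omega
      rw [hq] at hz
      have hp : p = (l : ℤ) := by omega
      rw [hp, hq] at hql
      rw [abs_of_nonneg (by positivity)] at hql
      simp at hql
    · have h3 : T ≤ |T * (p + q * (l : ℤ))| := by
        rw [abs_mul]
        have h4 : 1 ≤ |p + q * (l : ℤ)| := Int.one_le_abs hz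
        have h5 : 0 < T := by nlinarith
        rw [abs_of_pos h5]
        nlinarith
      rw [← h1] at h3
      have := le_trans h3 h2
      have hTv : T = A * ((l : ℤ) + 1) + 1 := hT
      linarith
  -- symmetry
  have hsymm : ∀ s ∈ E, -s ∈ E := by
    intro s hs
    rcases (hmemE s).1 hs with rfl | rfl | rfl | rfl | ⟨j, hj, rfl | rfl⟩
    · exact (hmemE _).2 (Or.inr (Or.inl rfl))
    · exact (hmemE _).2 (Or.inl (neg_neg v))
    · exact (hmemE _).2 (Or.inr (Or.inr (Or.inr (Or.inl rfl))))
    · exact (hmemE _).2 (Or.inr (Or.inr (Or.inl (neg_neg u))))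
    · refine (hmemE _).2 (Or.inr (Or.inr (Or.inr (Or.inr ⟨j, hj, Or.inr ?_⟩))))
      simp [Pi.single_neg]
    · refine (hmemE _).2 (Or.inr (Or.inr (Or.inr (Or.inr ⟨j, hj, Or.inl ?_⟩))))
      simp [Pi.single_neg]
  -- generation
  have hclosure : AddSubgroup.closure (E : Set (Fin d → ℤ)) = ⊤ := by
    rw [eq_top_iff]
    rintro x -
    have hvmem : v ∈ AddSubgroup.closure (E : Set (Fin d → ℤ)) :=
      AddSubgroup.subset_closure ((hmemE v).2 (Or.inl rfl))
    have humem : u ∈ AddSubgroup.closure (E : Set (Fin d → ℤ)) :=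
      AddSubgroup.subset_closure ((hmemE u).2 (Or.inr (Or.inr (Or.inl rfl))))
    have hsingle_smul : ∀ (j : Fin d) (c : ℤ),
        (Pi.single j c : Fin d → ℤ) = c • (Pi.single j (1 : ℤ) : Fin d → ℤ) := by
      intro j c
      funext k
      by_cases hk : k = j <;> simp [Pi.single_apply, hk]
    have hjmem : ∀ j, j ≠ i → ∀ c : ℤ,
        Pi.single j c ∈ AddSubgroup.closure (E : Set (Fin d → ℤ)) := by
      intro j hj c
      have h1 : Pi.single j (1 : ℤ) ∈ AddSubgroup.closure (E : Set (Fin d → ℤ)) :=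
        AddSubgroup.subset_closure
          ((hmemE _).2 (Or.inr (Or.inr (Or.inr (Or.inr ⟨j, hj, Or.inl rfl⟩)))))
      rw [hsingle_smul j c]
      exact AddSubgroup.zsmul_mem _ h1 c
    have hgmem : g ∈ AddSubgroup.closure (E : Set (Fin d → ℤ)) := by
      have hg' : g = (l : ℤ) • v - u := by rw [hu]; abel
      rw [hg']
      exact AddSubgroup.sub_mem _ (AddSubgroup.zsmul_mem _ hvmem _) humem
    have hgimem : Pi.single i (g i) ∈ AddSubgroup.closure (E : Set (Fin d → ℤ)) := by
      have h1 := Finset.add_sum_erase Finset.univ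
        (fun j => (Pi.single j (g j) : Fin d → ℤ)) (Finset.mem_univ i)
      rw [Finset.univ_sum_single] at h1
      have h1' : (Pi.single i (g i) : Fin d → ℤ)
          + ∑ j ∈ Finset.univ.erase i, Pi.single j (g j) = g := h1
      have hsplit : (Pi.single i (g i) : Fin d → ℤ)
          = g - ∑ j ∈ Finset.univ.erase i, Pi.single j (g j) := eq_sub_of_add_eq h1'
      rw [hsplit]
      exact AddSubgroup.sub_mem _ hgmem
        (AddSubgroup.sum_mem _ fun j hj => hjmem j (Finset.mem_erase.mp hj).1 _)
    have honei : Pi.single i (1 : ℤ) ∈ AddSubgroup.closure (E : Set (Fin d → ℤ)) := by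
      obtain ⟨y, hy⟩ : ∃ y : ℤ, T + y * g i = 1 := by
        rcases lt_or_gt_of_ne hi with h | h
        · exact ⟨(l : ℤ) + 1, by rw [hT, hA, abs_of_neg h]; ring⟩
        · exact ⟨-((l : ℤ) + 1), by rw [hT, hA, abs_of_pos h]; ring⟩
      have heq : Pi.single i (1 : ℤ) = v + y • Pi.single i (g i) := by
        rw [hv]
        funext k
        by_cases hk : k = i <;> simp [Pi.single_apply, hk]
        linarith
      rw [heq]
      exact AddSubgroup.add_mem _ hvmem (AddSubgroup.zsmul_mem _ hgimem y)
    have hall : ∀ (j : Fin d) (c : ℤ),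
        Pi.single j c ∈ AddSubgroup.closure (E : Set (Fin d → ℤ)) := by
      intro j c
      by_cases hj : j = i
      · subst hj
        rw [hsingle_smul j c]
        exact AddSubgroup.zsmul_mem _ honei c
      · exact hjmem j hj c
    have hx : x = ∑ j, Pi.single j (x j) := (Finset.univ_sum_single x).symm
    rw [hx]
    exact AddSubgroup.sum_mem _ fun j _ => hall j (x j)
  refine ⟨E, ⟨hsymm, hclosure⟩, ?_⟩
  unfold addWordLen
  exact le_antisymm (Nat.sInf_le hup) (le_csInf ⟨_, hup⟩ hlow)
end

section
/- For G = ℤ: (a) G_bound(2) = ℤ, i.e. every integer has uniformly bounded word length over all symmetric generating sets of cardinality at most 2; (b) for every m ≥ 4, G_bound(m) = {0}: for every nonzero integer g and every constant K > 0 there exists a symmetric generating set S of ℤ of cardinality at most 4 with l_S(g) > K. -/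
/-- Elements of uniformly bounded word length over symmetric generating sets of
cardinality at most `d`. -/
def AddGBoundD (G : Type*) [AddGroup G] (d : ℕ) : Set G :=
  {g | ∃ M : ℕ, 0 < M ∧ ∀ S : Finset G, IsSymmGenAdd S → S.card ≤ d →
    addWordLen S g ≤ M}


lemma rep_lemma (p q : ℤ) (w : List ℤ)
    (hw : ∀ s ∈ w, s = p ∨ s = -p ∨ s = q ∨ s = -q) :
    ∃ a b : ℤ, w.sum = a * p + b * q ∧ a.natAbs + b.natAbs ≤ w.length := by
  induction w with
  | nil => exact ⟨0, 0, by simp, by simp⟩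
  | cons s w ih =>
    obtain ⟨a, b, hsum, hlen⟩ := ih (fun x hx => hw x (List.mem_cons_of_mem _ hx))
    have h1 := Int.natAbs_add_le a 1
    have h2 := Int.natAbs_add_le a (-1)
    have h3 := Int.natAbs_add_le b 1
    have h4 := Int.natAbs_add_le b (-1)
    simp only [Int.natAbs_one, Int.natAbs_neg] at h1 h2 h3 h4
    rcases hw s List.mem_cons_self with h | h | h | h
    · exact ⟨a + 1, b, by rw [List.sum_cons, hsum, h]; ring,
        by simp only [List.length_cons]; omega⟩
    · exact ⟨a + (-1), b, by rw [List.sum_cons, hsum, h]; ring,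
        by simp only [List.length_cons]; omega⟩
    · exact ⟨a, b + 1, by rw [List.sum_cons, hsum, h]; ring,
        by simp only [List.length_cons]; omega⟩
    · exact ⟨a, b + (-1), by rw [List.sum_cons, hsum, h]; ring,
        by simp only [List.length_cons]; omega⟩

lemma wordLen_le_of_word {S : Finset ℤ} {g : ℤ} (w : List ℤ)
    (h : ∀ s ∈ w, s ∈ S) (hs : w.sum = g) : addWordLen S g ≤ w.length := by
  exact Nat.sInf_le ⟨w, h, rfl, hs⟩

lemma one_mem_of_card_le_two {S : Finset ℤ} (hsym : ∀ s ∈ S, -s ∈ S)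
    (hgen : AddSubgroup.closure (S : Set ℤ) = ⊤) (hcard : S.card ≤ 2) :
    (1 : ℤ) ∈ S ∧ (-1 : ℤ) ∈ S := by
  obtain ⟨a, ha⟩ : S.Nonempty := by
    rcases S.eq_empty_or_nonempty with h | h
    · exfalso; rw [h] at hgen; simp at hgen
    · exact h
  have hsub : (S : Set ℤ) ⊆ {a, -a} := by
    intro b hb
    by_contra hb'
    have hba : b ≠ a := fun h => hb' (by simp [h])
    have hbna : b ≠ -a := fun h => hb' (by simp [h])
    have hbS : b ∈ S := hb
    have h2 : S.card = 2 := by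
      have : ({a, b} : Finset ℤ) ⊆ S := by
        intro x hx; simp at hx; rcases hx with rfl | rfl <;> assumption
      have hle := Finset.card_le_card this
      rw [Finset.card_insert_of_notMem (by simp [Ne.symm hba]), Finset.card_singleton] at hle
      omega
    have hSeq : S = {a, b} := by
      refine (Finset.eq_of_subset_of_card_le ?_ ?_).symm
      · intro x hx; simp at hx; rcases hx with rfl | rfl <;> assumption
      · rw [h2, Finset.card_insert_of_notMem (by simp [Ne.symm hba]), Finset.card_singleton]
    have hna : -a ∈ S := hsym a ha
    rw [hSeq] at hna
    simp at hna
    rcases hna with h | h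
    · -- -a = a, so a = 0
      have ha0 : a = 0 := by omega
      have hnb : -b ∈ S := hsym b hbS
      rw [hSeq] at hnb
      simp at hnb
      rcases hnb with h' | h'
      · exact hba (by omega)
      · have : b = 0 := by omega
        exact hba (by omega)
    · exact hbna h.symm
  have h1 : (1 : ℤ) ∈ AddSubgroup.zmultiples a := by
    have hle : AddSubgroup.closure (S : Set ℤ) ≤ AddSubgroup.zmultiples a := by
      rw [AddSubgroup.closure_le]
      intro x hx
      have := hsub hx
      simp only [Set.mem_insert_iff, Set.mem_singleton_iff] at this
      rcases this with h | h
      · rw [h]; exact AddSubgroup.mem_zmultiples a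
      · rw [h]; exact neg_mem (AddSubgroup.mem_zmultiples a)
    exact hle (hgen ▸ AddSubgroup.mem_top 1)
  obtain ⟨k, hk⟩ := AddSubgroup.mem_zmultiples_iff.mp h1
  have hdvd : a ∣ 1 := ⟨k, by rw [← hk, zsmul_eq_mul]; push_cast; ring⟩
  rcases Int.isUnit_iff.mp (isUnit_of_dvd_one hdvd) with rfl | rfl
  · exact ⟨ha, hsym 1 ha⟩
  · exact ⟨by simpa using hsym (-1) ha, ha⟩

lemma keyC (g : ℤ) (hg : g ≠ 0) (K : ℕ) (hK : 0 < K) :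
    ∃ S : Finset ℤ, IsSymmGenAdd S ∧ S.card ≤ 4 ∧ K < addWordLen S g := by
  set N : ℤ := (K : ℤ) + g.natAbs + 1 with hN
  set q : ℤ := N * K + 1 with hq
  have hN0 : N ≠ 0 := by positivity
  refine ⟨{N, -N, q, -q}, ⟨?_, ?_⟩, ?_, ?_⟩
  · intro s hs
    simp only [Finset.mem_insert, Finset.mem_singleton] at hs ⊢
    omega
  · rw [AddSubgroup.eq_top_iff']
    intro x
    have hNmem : N ∈ AddSubgroup.closure ({N, -N, q, -q} : Finset ℤ) :=
      AddSubgroup.subset_closure (by simp)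
    have hqmem : q ∈ AddSubgroup.closure ({N, -N, q, -q} : Finset ℤ) :=
      AddSubgroup.subset_closure (by simp)
    have h1 : (1 : ℤ) ∈ AddSubgroup.closure ({N, -N, q, -q} : Finset ℤ) := by
      have := sub_mem hqmem (zsmul_mem hNmem (K : ℤ))
      have heq : q - (K : ℤ) • N = 1 := by rw [zsmul_eq_mul]; push_cast; rw [hq]; ring
      rwa [heq] at this
    have := zsmul_mem h1 x
    simpa using this
  · refine (Finset.card_insert_le _ _).trans ?_
    refine Nat.succ_le_succ ((Finset.card_insert_le _ _).trans ?_)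
    refine Nat.succ_le_succ ((Finset.card_insert_le _ _).trans ?_)
    simp
  · -- word length bound
    have hne : {n : ℕ | ∃ w : List ℤ, (∀ s ∈ w, s ∈ ({N, -N, q, -q} : Finset ℤ)) ∧
        w.length = n ∧ w.sum = g}.Nonempty := by
      rcases lt_or_gt_of_ne hg with hneg | hpos
      · refine ⟨_, List.replicate g.natAbs (-q) ++ List.replicate (g.natAbs * K) N,
          ?_, rfl, ?_⟩
        · intro s hs
          rcases List.mem_append.mp hs with h | h <;>
            rw [List.eq_of_mem_replicate h] <;> simp
        · have hcast : (g.natAbs : ℤ) = -g := by omega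
          rw [List.sum_append, List.sum_replicate, List.sum_replicate,
            nsmul_eq_mul, nsmul_eq_mul]
          push_cast [hcast]
          rw [hq]; ring
      · refine ⟨_, List.replicate g.natAbs q ++ List.replicate (g.natAbs * K) (-N),
          ?_, rfl, ?_⟩
        · intro s hs
          rcases List.mem_append.mp hs with h | h <;>
            rw [List.eq_of_mem_replicate h] <;> simp
        · have hcast : (g.natAbs : ℤ) = g := by omega
          rw [List.sum_append, List.sum_replicate, List.sum_replicate,
            nsmul_eq_mul, nsmul_eq_mul]
          push_cast [hcast]
          rw [hq]; ring
    have hmem := Nat.sInf_mem hne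
    obtain ⟨w, hw, hlen, hsum⟩ := hmem
    obtain ⟨a, b, hab, hablen⟩ := rep_lemma N q w (by
      intro s hs
      have := hw s hs
      simp only [Finset.mem_insert, Finset.mem_singleton] at this
      tauto)
    rw [hsum] at hab
    rw [addWordLen, ← hlen]
    have hkey : K < a.natAbs + b.natAbs := by
      have ht : g - b = (a + b * K) * N := by
        rw [hq] at hab; linear_combination hab
      by_cases htz : a + b * (K : ℤ) = 0
      · have hb : b = g := by rw [htz, zero_mul] at ht; omega
        have ha' : a * N = (-(g * (K : ℤ))) * N := by
          rw [hq] at hab; rw [hb] at hab; linear_combination -hab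
        have ha : a = -(g * (K : ℤ)) := mul_right_cancel₀ hN0 ha'
        have h1 : a.natAbs = g.natAbs * K := by
          rw [ha, Int.natAbs_neg, Int.natAbs_mul, Int.natAbs_natCast]
        have h2 : 1 ≤ g.natAbs := by omega
        have h3 : K ≤ g.natAbs * K := Nat.le_mul_of_pos_left K (by omega)
        have h4 : b.natAbs = g.natAbs := by rw [hb]
        omega
      · have h5 : (g - b).natAbs = (a + b * K).natAbs * N.natAbs := by
          rw [ht, Int.natAbs_mul]
        have h6 : 0 < (a + b * (K : ℤ)).natAbs := Int.natAbs_pos.mpr htz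
        have h7 : N.natAbs = K + g.natAbs + 1 := by omega
        have h8 : (g - b).natAbs ≤ g.natAbs + b.natAbs := Int.natAbs_sub_le g b
        have h9 : N.natAbs ≤ (a + b * (K : ℤ)).natAbs * N.natAbs :=
          Nat.le_mul_of_pos_left _ h6
        omega
    omega


/-- For `G = ℤ`: `G_bound(2) = ℤ`, while `G_bound(m) = {0}` for every `m ≥ 4`;
indeed every nonzero integer has unbounded word length over symmetric
generating sets of cardinality at most `4`. -/
theorem stmt16 :
    AddGBoundD ℤ 2 = Set.univ ∧
    (∀ m : ℕ, 4 ≤ m → AddGBoundD ℤ m = {0}) ∧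
    (∀ g : ℤ, g ≠ 0 → ∀ K : ℕ, 0 < K →
      ∃ S : Finset ℤ, IsSymmGenAdd S ∧ S.card ≤ 4 ∧ K < addWordLen S g) := by
  refine ⟨?_, ?_, fun g hg K hK => keyC g hg K hK⟩
  · ext g
    simp only [Set.mem_univ, iff_true, AddGBoundD, Set.mem_setOf_eq]
    refine ⟨g.natAbs + 1, by omega, fun S hS hcard => ?_⟩
    obtain ⟨h1, hm1⟩ := one_mem_of_card_le_two hS.1 hS.2 hcard
    rcases le_or_gt 0 g with hpos | hneg
    · have h := wordLen_le_of_word (S := S) (g := g) (List.replicate g.natAbs 1)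
        (fun s hs => by rw [List.eq_of_mem_replicate hs]; exact h1)
        (by rw [List.sum_replicate, nsmul_eq_mul, mul_one]; omega)
      simp only [List.length_replicate] at h
      omega
    · have h := wordLen_le_of_word (S := S) (g := g) (List.replicate g.natAbs (-1))
        (fun s hs => by rw [List.eq_of_mem_replicate hs]; exact hm1)
        (by rw [List.sum_replicate, nsmul_eq_mul, mul_neg_one]; omega)
      simp only [List.length_replicate] at h
      omega
  · intro m hm
    ext g
    simp only [Set.mem_singleton_iff, AddGBoundD, Set.mem_setOf_eq]
    constructor
    · rintro ⟨M, hM, hbound⟩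
      by_contra hg
      obtain ⟨S, hS, hcard, hlt⟩ := keyC g hg M hM
      exact absurd (hbound S hS (hcard.trans hm)) (by omega)
    · rintro rfl
      refine ⟨1, one_pos, fun S hS _ => ?_⟩
      have h := wordLen_le_of_word (S := S) (g := (0 : ℤ)) [] (by simp) (by simp)
      simpa using h.trans (by norm_num)
end

section
/- Let d ≥ 2 and G = ℤ^d. Then for every m ≥ 2d, G_bound(m) = {0}: for every nonzero X ∈ ℤ^d and every constant K > 0 there exists a symmetric generating set S of ℤ^d of cardinality at most 2d with l_S(X) > K. -/
lemma aux_abs_sum_le {G : Type*} [AddGroup G] (f : G → ℤ)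
    (hf : ∀ a b, f (a + b) = f a + f b) (hf0 : f 0 = 0)
    (S : Finset G) (hS : ∀ s ∈ S, |f s| ≤ 1) :
    ∀ w : List G, (∀ s ∈ w, s ∈ S) → |f w.sum| ≤ (w.length : ℤ) := by
  intro w
  induction w with
  | nil => simp [hf0]
  | cons a t ih =>
    intro h
    have ha : |f a| ≤ 1 := hS a (h a (by simp))
    have ht : |f t.sum| ≤ (t.length : ℤ) := ih fun s hs => h s (by simp [hs])
    have habs := abs_add_le (f a) (f t.sum)
    simp only [List.sum_cons, hf, List.length_cons]
    push_cast
    linarith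

lemma aux_key (d : ℕ) (hd : 2 ≤ d) (X : Fin d → ℤ) (hX : X ≠ 0) (K : ℕ) :
    ∃ S : Finset (Fin d → ℤ), IsSymmGenAdd S ∧ S.card ≤ 2 * d ∧ K < addWordLen S X := by
  obtain ⟨i, hi⟩ : ∃ i, X i ≠ 0 := by
    by_contra h; push_neg at h; exact hX (funext h)
  obtain ⟨j, hj⟩ : ∃ j, j ≠ i :=
    Fintype.exists_ne_of_one_lt_card (by simpa using by omega) i
  set N : ℕ := K + 1 + (X j).natAbs with hN
  set v : Fin d → (Fin d → ℤ) := fun k =>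
    if k = i then Pi.single i 1 - (N : ℤ) • Pi.single j 1 else Pi.single k 1 with hv
  set S : Finset (Fin d → ℤ) :=
    Finset.image v Finset.univ ∪ Finset.image (fun k => -v k) Finset.univ with hS
  have hmem1 : ∀ k, v k ∈ S := fun k =>
    Finset.mem_union_left _ (Finset.mem_image_of_mem v (Finset.mem_univ k))
  have hmem2 : ∀ k, -v k ∈ S := fun k =>
    Finset.mem_union_right _ (Finset.mem_image_of_mem _ (Finset.mem_univ k))
  have hsymm : ∀ s ∈ S, -s ∈ S := by
    intro s hs
    rw [hS, Finset.mem_union] at hs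
    rcases hs with hs | hs <;> simp only [Finset.mem_image] at hs <;>
      obtain ⟨k, _, rfl⟩ := hs
    · exact hmem2 k
    · simpa using hmem1 k
  have hsingle : ∀ k, Pi.single k (1:ℤ) ∈ AddSubgroup.closure (S : Set (Fin d → ℤ)) := by
    intro k
    by_cases hk : k = i
    · rw [hk]
      have h1 : v i ∈ AddSubgroup.closure (S : Set (Fin d → ℤ)) :=
        AddSubgroup.subset_closure (hmem1 i)
      have h2 : Pi.single j (1:ℤ) ∈ AddSubgroup.closure (S : Set (Fin d → ℤ)) := by
        have := AddSubgroup.subset_closure (G := Fin d → ℤ) (k := S) (hmem1 j)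
        simpa [hv, hj] using this
      have heq : Pi.single i (1:ℤ) = v i + (N : ℤ) • Pi.single j 1 := by
        simp [hv]
      rw [heq]
      exact AddSubgroup.add_mem _ h1 (AddSubgroup.zsmul_mem _ h2 _)
    · have := AddSubgroup.subset_closure (G := Fin d → ℤ) (k := S) (hmem1 k)
      simpa [hv, hk] using this
  have hclos : AddSubgroup.closure (S : Set (Fin d → ℤ)) = ⊤ := by
    rw [eq_top_iff]
    intro x _
    have hx : x = ∑ k, x k • Pi.single k (1:ℤ) := by
      conv_lhs => rw [← Finset.univ_sum_single x]
      refine Finset.sum_congr rfl fun k _ => ?_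
      rw [← Pi.single_smul, smul_eq_mul, mul_one]
    rw [hx]
    exact AddSubgroup.sum_mem _ fun k _ => AddSubgroup.zsmul_mem _ (hsingle k) _
  -- the functional
  set f : (Fin d → ℤ) → ℤ := fun Y => (N : ℤ) * Y i + Y j with hf
  have hfadd : ∀ a b, f (a + b) = f a + f b := by
    intro a b; simp [hf, Pi.add_apply]; ring
  have hf0 : f 0 = 0 := by simp [hf]
  have hfneg : ∀ a, f (-a) = -f a := by
    intro a; simp [hf, Pi.neg_apply]; ring
  have hfS : ∀ s ∈ S, |f s| ≤ 1 := by
    have hvk : ∀ k, |f (v k)| ≤ 1 := by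
      intro k
      by_cases hk : k = i
      · rw [hk]
        have : f (v i) = 0 := by
          simp [hf, hv, Pi.single_apply, hj, Ne.symm hj]
          
        simp [this]
      · have : f (v k) = if j = k then 1 else 0 := by
          simp [hf, hv, hk, Pi.single_apply, Ne.symm hk]
        rw [this]
        split <;> simp
    intro s hs
    rw [hS, Finset.mem_union] at hs
    rcases hs with hs | hs <;> simp only [Finset.mem_image] at hs <;>
      obtain ⟨k, _, rfl⟩ := hs
    · exact hvk k
    · rw [hfneg, abs_neg]; exact hvk k
  have hfX : (K : ℤ) + 1 ≤ |f X| := by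
    have h1 : (1:ℤ) ≤ |X i| := Int.one_le_abs hi
    have hNval : (N : ℤ) = (K : ℤ) + 1 + |X j| := by
      rw [hN]; push_cast [Int.natCast_natAbs]; ring
    have h2 : |(N:ℤ) * X i| = (N:ℤ) * |X i| := by
      rw [abs_mul, abs_of_nonneg (by positivity)]
    have h3 : |(N:ℤ) * X i| ≤ |f X| + |X j| := by
      have := abs_add_le (f X) (-X j)
      have heq : f X + -X j = (N:ℤ) * X i := by simp [hf]
      rw [heq] at this
      simpa using this
    have h4 : (N:ℤ) ≤ (N:ℤ) * |X i| := by nlinarith [Nat.cast_nonneg (α := ℤ) N]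
    linarith
  -- nonemptiness of the word set
  have hXmem : X ∈ AddSubgroup.closure (S : Set (Fin d → ℤ)) := by
    rw [hclos]; trivial
  have hXmem' : X ∈ AddSubmonoid.closure ((S : Set (Fin d → ℤ)) ∪ -(S : Set (Fin d → ℤ))) := by
    rw [← AddSubgroup.closure_toAddSubmonoid]
    exact hXmem
  obtain ⟨l, hl1, hl2⟩ := AddSubmonoid.exists_list_of_mem_closure hXmem'
  have hlS : ∀ s ∈ l, s ∈ S := by
    intro s hs
    rcases hl1 s hs with h | h
    · exact h
    · have : -s ∈ S := by simpa using h
      simpa using hsymm _ this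
  have hne : {n : ℕ | ∃ w : List (Fin d → ℤ), (∀ s ∈ w, s ∈ S) ∧ w.length = n ∧ w.sum = X}.Nonempty :=
    ⟨l.length, l, hlS, rfl, hl2⟩
  refine ⟨S, ⟨hsymm, hclos⟩, ?_, ?_⟩
  · calc S.card ≤ (Finset.image v Finset.univ).card + (Finset.image (fun k => -v k) Finset.univ).card :=
        Finset.card_union_le _ _
      _ ≤ d + d := by
        have h1 := Finset.card_image_le (f := v) (s := Finset.univ)
        have h2 := Finset.card_image_le (f := fun k => -v k) (s := Finset.univ)
        simp only [Finset.card_univ, Fintype.card_fin] at h1 h2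
        omega
      _ = 2 * d := by ring
  · have hmem := Nat.sInf_mem hne
    obtain ⟨w, hw1, hw2, hw3⟩ := hmem
    have hbound : |f X| ≤ (w.length : ℤ) := by
      rw [← hw3]
      exact aux_abs_sum_le f hfadd hf0 S hfS w hw1
    have hlt : (K : ℤ) < (w.length : ℤ) := by linarith
    rw [addWordLen, ← hw2]
    exact_mod_cast hlt

/-- For `G = ℤ^d` with `d ≥ 2` and every `m ≥ 2d`, `G_bound(m) = {0}`; indeed
every nonzero `X ∈ ℤ^d` has unbounded word length over symmetric generating
sets of cardinality at most `2d`. -/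
theorem stmt17 (d : ℕ) (hd : 2 ≤ d) :
    (∀ m : ℕ, 2 * d ≤ m → AddGBoundD (Fin d → ℤ) m = {0}) ∧
    (∀ X : Fin d → ℤ, X ≠ 0 → ∀ K : ℕ, 0 < K →
      ∃ S : Finset (Fin d → ℤ), IsSymmGenAdd S ∧ S.card ≤ 2 * d ∧
        K < addWordLen S X) := by
  constructor
  · intro m hm
    ext x
    simp only [Set.mem_singleton_iff]
    constructor
    · rintro ⟨M, hM, hall⟩
      by_contra hx0
      obtain ⟨S, hsg, hcard, hlt⟩ := aux_key d hd x hx0 M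
      have := hall S hsg (hcard.trans hm)
      omega
    · rintro rfl
      refine ⟨1, one_pos, fun S _ _ => ?_⟩
      have h0 : 0 ∈ {n : ℕ | ∃ w : List (Fin d → ℤ), (∀ s ∈ w, s ∈ S) ∧ w.length = 0 ∧ w.sum = 0} :=
        ⟨[], by simp, rfl, rfl⟩
      have : addWordLen S (0 : Fin d → ℤ) ≤ 0 := Nat.sInf_le h0
      omega
  · intro X hX K _
    exact aux_key d hd X hX K
end
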